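/- arXiv:2110.13452 — 7 statements merged into one kernel-verified Lean document; each statement's English description precedes it below -/
import Mathlib

section
/- Let d ≥ 1, let σ > 0, let μ, μ* ∈ ℝ^d and let Σ ∈ ℝ^{d×d} be positive definite. Then MMD(N(·;μ,Σ), N(·;μ*,Σ)) = (2 / √det(2(1/σ²)Σ + I)) · (1 − exp(-(1/(2σ²)) (μ-μ*)ᵀ (2(1/σ²)Σ + I)⁻¹ (μ-μ*))). -/
open MeasureTheory Matrix Real

/-- The multivariate Gaussian density `N(z; μ, Σ)` on `ℝ^d`. -/
noncomputable def gaussianDensity {d : ℕ} (μ : EuclideanSpace ℝ (Fin d))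
    (S : Matrix (Fin d) (Fin d) ℝ) (z : EuclideanSpace ℝ (Fin d)) : ℝ :=
  (2 * Real.pi) ^ (-(d : ℝ) / 2) * S.det ^ (-(1 : ℝ) / 2) *
    Real.exp (-(1 / 2) * ((z - μ) ⬝ᵥ (S⁻¹ *ᵥ (z - μ))))

/-- The Gaussian RBF kernel with width parameter `σ`. -/
noncomputable def rbfKernel {d : ℕ} (σ : ℝ) (x y : EuclideanSpace ℝ (Fin d)) : ℝ :=
  Real.exp (-‖x - y‖ ^ 2 / (2 * σ ^ 2))

/-- The population MMD objective between two densities `p` and `q` on `ℝ^d`. -/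
noncomputable def mmd {d : ℕ} (σ : ℝ) (p q : EuclideanSpace ℝ (Fin d) → ℝ) : ℝ :=
  (∫ x, ∫ x', rbfKernel σ x x' * p x * p x') +
    (∫ y, ∫ y', rbfKernel σ y y' * q y * q y') -
    2 * ∫ x, ∫ y, rbfKernel σ x y * p x * q y

/-! ### Auxiliary 1-dimensional Gaussian integral lemmas -/

lemma gauss_sq (p q x y : ℝ) (hpq : 0 < p + q) (t : ℝ) :
    p*(x-t)^2 + q*(t-y)^2
      = (p+q)*(t-(p*x+q*y)/(p+q))^2 + (p*q/(p+q))*(x-y)^2 := by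
  field_simp
  ring

lemma gauss_fun_eq (p q x y : ℝ) (hpq : 0 < p + q) :
    (fun t => Real.exp (-(p*(x-t)^2 + q*(t-y)^2)))
      = fun t => Real.exp (-((p*q/(p+q))*(x-y)^2)) *
          Real.exp (-(p+q)*(t-(p*x+q*y)/(p+q))^2) := by
  funext t
  rw [← Real.exp_add, gauss_sq p q x y hpq t]
  ring_nf

lemma gauss_conv (p q x y : ℝ) (hp : 0 < p) (hq : 0 < q) :
    ∫ t : ℝ, Real.exp (-(p*(x-t)^2 + q*(t-y)^2))
      = Real.sqrt (π/(p+q)) * Real.exp (-((p*q/(p+q))*(x-y)^2)) := by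
  rw [gauss_fun_eq p q x y (by linarith), integral_const_mul]
  have : ∫ t : ℝ, Real.exp (-(p+q)*(t-(p*x+q*y)/(p+q))^2)
      = ∫ t : ℝ, Real.exp (-(p+q)*t^2) :=
    integral_sub_right_eq_self (fun t => Real.exp (-(p+q)*t^2)) _
  rw [this, integral_gaussian]
  ring

lemma oneD (σ l a b : ℝ) (hσ : 0 < σ) (hl : 0 < l) :
    ∫ s : ℝ, ∫ t : ℝ, Real.exp (-(s-t)^2/(2*σ^2)) *
        ((2*π*l)^(-(1:ℝ)/2) * Real.exp (-(s-a)^2/(2*l))) *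
        ((2*π*l)^(-(1:ℝ)/2) * Real.exp (-(t-b)^2/(2*l)))
      = (2*(1/σ^2)*l+1)^(-(1:ℝ)/2) *
          Real.exp (-(1/(2*σ^2)) * ((a-b)^2 * (1/(2*(1/σ^2)*l+1)))) := by
  have hπ := Real.pi_pos
  set c : ℝ := 1/(2*σ^2) with hc
  set q : ℝ := 1/(2*l) with hq
  set A : ℝ := (2*π*l)^(-(1:ℝ)/2) with hA
  set r : ℝ := c*q/(c+q) with hr
  set m : ℝ := 2*(1/σ^2)*l+1 with hm
  have hc0 : 0 < c := by positivity
  have hq0 : 0 < q := by positivity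
  have hr0 : 0 < r := by positivity
  have hm0 : 0 < m := by positivity
  have hig : ∀ s t : ℝ, Real.exp (-(s-t)^2/(2*σ^2)) *
        (A * Real.exp (-(s-a)^2/(2*l))) * (A * Real.exp (-(t-b)^2/(2*l)))
      = (A*A*Real.exp (-(q*(s-a)^2))) * Real.exp (-(c*(s-t)^2 + q*(t-b)^2)) := by
    intro s t
    rw [hc, hq, neg_add, Real.exp_add]
    ring
  have hinner : ∀ s : ℝ, (∫ t : ℝ, Real.exp (-(s-t)^2/(2*σ^2)) *
        (A * Real.exp (-(s-a)^2/(2*l))) * (A * Real.exp (-(t-b)^2/(2*l))))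
      = (A*A*Real.sqrt (π/(c+q))) * Real.exp (-(q*(a-s)^2 + r*(s-b)^2)) := by
    intro s
    simp only [hig]
    rw [integral_const_mul, gauss_conv c q s b hc0 hq0, ← hr, neg_add, Real.exp_add]
    have : (a-s)^2 = (s-a)^2 := by ring
    rw [this]
    ring
  simp only [hinner]
  rw [integral_const_mul, gauss_conv q r a b hq0 hr0]
  have hq' : q ≠ 0 := ne_of_gt hq0
  have hm' : m ≠ 0 := ne_of_gt hm0
  have hcq : c + q ≠ 0 := by positivity
  have hqr : q + r ≠ 0 := by positivity
  have hprod : (c+q)*(q+r) = q^2*m := by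
    rw [hr, hm, hc, hq]; field_simp; ring
  have hcoeff : q*r/(q+r) = c * (1/m) := by
    rw [div_eq_iff hqr]
    have : q * r * ((c+q)*(q+r)) = c * (1/m) * (q+r) * ((c+q)*(q+r)) → q*r = c*(1/m)*(q+r) := by
      intro h
      have h2 : (c+q)*(q+r) ≠ 0 := mul_ne_zero hcq hqr
      exact mul_right_cancel₀ h2 h
    apply this
    rw [hprod, hr, hm, hc, hq]
    field_simp
    ring
  have hconst : A*A*Real.sqrt (π/(c+q))*Real.sqrt (π/(q+r)) = m^(-(1:ℝ)/2) := by
    have hA2 : A*A = 1/(2*π*l) := by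
      rw [hA, ← Real.rpow_add (by positivity)]
      norm_num [Real.rpow_neg_one]
    have harg : π/(c+q)*(π/(q+r)) = (π/q)^2 * m⁻¹ := by
      rw [div_mul_div_comm, hprod]
      field_simp
    have h1 : Real.sqrt (π/(c+q)) * Real.sqrt (π/(q+r)) = π/(q*Real.sqrt m) := by
      rw [← Real.sqrt_mul (by positivity), harg, Real.sqrt_mul (sq_nonneg _),
        Real.sqrt_sq (by positivity), Real.sqrt_inv]
      field_simp
    rw [mul_assoc, h1, hA2]
    rw [show (-(1:ℝ)/2) = -(1/2) by norm_num, Real.rpow_neg hm0.le, ← Real.sqrt_eq_rpow]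
    rw [hq]
    have hsm : Real.sqrt m ≠ 0 := by positivity
    field_simp
  rw [hcoeff, ← hconst]
  ring_nf

/-! ### Pi-space integration machinery -/

lemma prod_double {d : ℕ} (F : Fin d → ℝ → ℝ → ℝ) :
    (∫ x : Fin d → ℝ, ∫ y : Fin d → ℝ, ∏ i, F i (x i) (y i))
      = ∏ i, ∫ s : ℝ, ∫ t : ℝ, F i s t := by
  have h1 : ∀ x : Fin d → ℝ, (∫ y : Fin d → ℝ, ∏ i, F i (x i) (y i))
      = ∏ i, ∫ t : ℝ, F i (x i) t := fun x =>
    MeasureTheory.integral_fintype_prod_eq_prod (fun i t => F i (x i) t)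
  simp_rw [h1]
  exact MeasureTheory.integral_fintype_prod_eq_prod (fun i s => ∫ t, F i s t)

lemma integral_comp_mulVec {d : ℕ} (Q R : Matrix (Fin d) (Fin d) ℝ)
    (h1 : Q * R = 1) (hdet : |Q.det| = 1) (g : (Fin d → ℝ) → ℝ) :
    ∫ x : Fin d → ℝ, g (Q *ᵥ x) = ∫ x : Fin d → ℝ, g x := by
  have h2 : R * Q = 1 := mul_eq_one_comm.mp h1
  have hd : Q.det ≠ 0 := by
    intro h; rw [h] at hdet; simp at hdet
  let e : (Fin d → ℝ) ≃ₗ[ℝ] (Fin d → ℝ) :=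
    LinearEquiv.ofLinear (Matrix.toLin' Q) (Matrix.toLin' R)
      (by rw [← Matrix.toLin'_mul, h1, Matrix.toLin'_one])
      (by rw [← Matrix.toLin'_mul, h2, Matrix.toLin'_one])
  have hmp : MeasurePreserving (fun x : Fin d → ℝ => Q *ᵥ x) volume volume := by
    refine ⟨(Matrix.toLin' Q).continuous_of_finiteDimensional.measurable, ?_⟩
    rw [show (fun x : Fin d → ℝ => Q *ᵥ x) = fun x => Matrix.toLin' Q x by
      funext x; rw [Matrix.toLin'_apply], Real.map_matrix_volume_pi_eq_smul_volume_pi hd]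
    rw [abs_inv, hdet]
    norm_num
  have hemb : MeasurableEmbedding (fun x : Fin d → ℝ => Q *ᵥ x) := by
    have : (fun x : Fin d → ℝ => Q *ᵥ x)
        = (e.toContinuousLinearEquiv.toHomeomorph : (Fin d → ℝ) → (Fin d → ℝ)) := by
      funext x
      simp [e, Matrix.toLin'_apply]
    rw [this]
    exact e.toContinuousLinearEquiv.toHomeomorph.measurableEmbedding
  exact hmp.integral_comp hemb g

/-- The identity map from the pi space to Euclidean space. -/
noncomputable def es {d : ℕ} : (Fin d → ℝ) → EuclideanSpace ℝ (Fin d) :=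
  MeasurableEquiv.toLp 2 (Fin d → ℝ)

lemma integral_euclidean_eq_pi {d : ℕ} (f : EuclideanSpace ℝ (Fin d) → ℝ) :
    ∫ x : EuclideanSpace ℝ (Fin d), f x = ∫ x : Fin d → ℝ, f (es x) :=
  (MeasurePreserving.integral_comp
    ((EuclideanSpace.volume_preserving_symm_measurableEquiv_toLp (Fin d)).symm
      (MeasurableEquiv.toLp 2 (Fin d → ℝ)).symm)
    (MeasurableEquiv.measurableEmbedding _) f).symm

/-! ### Matrix algebra lemmas -/

lemma qf_eq {d : ℕ} (Q : Matrix (Fin d) (Fin d) ℝ) (N : Fin d → ℝ) (v : Fin d → ℝ) :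
    v ⬝ᵥ ((Q * diagonal N * Qᵀ) *ᵥ v) = ∑ i, N i * ((Qᵀ *ᵥ v) i)^2 := by
  have h1 : (Q * diagonal N * Qᵀ) *ᵥ v = Q *ᵥ (diagonal N *ᵥ (Qᵀ *ᵥ v)) := by
    rw [Matrix.mulVec_mulVec, Matrix.mulVec_mulVec, mul_assoc]
  rw [h1, Matrix.dotProduct_mulVec, ← Matrix.mulVec_transpose]
  simp only [dotProduct, Matrix.mulVec_diagonal]
  exact Finset.sum_congr rfl (fun i _ => by ring)

lemma mulVec_orth_cancel {d : ℕ} (Q : Matrix (Fin d) (Fin d) ℝ)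
    (h : Qᵀ * Q = 1) (v : Fin d → ℝ) : Qᵀ *ᵥ (Q *ᵥ v) = v := by
  rw [Matrix.mulVec_mulVec, h, Matrix.one_mulVec]

lemma dot_orth {d : ℕ} (Q : Matrix (Fin d) (Fin d) ℝ) (h : Qᵀ * Q = 1) (v : Fin d → ℝ) :
    (Q *ᵥ v) ⬝ᵥ (Q *ᵥ v) = v ⬝ᵥ v := by
  rw [Matrix.dotProduct_mulVec, ← Matrix.mulVec_transpose, Matrix.mulVec_mulVec, h,
    Matrix.one_mulVec]

lemma sandwich_mul {d : ℕ} (Q : Matrix (Fin d) (Fin d) ℝ) (h : Qᵀ * Q = 1)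
    (N N' : Fin d → ℝ) :
    (Q * diagonal N * Qᵀ) * (Q * diagonal N' * Qᵀ) = Q * diagonal (N * N') * Qᵀ := by
  have hd : diagonal N * (Qᵀ * Q) * diagonal N' = diagonal (N * N') := by
    rw [h, mul_one, Matrix.diagonal_mul_diagonal]
    rfl
  rw [← hd]
  noncomm_ring

lemma constSplit {d : ℕ} (L : Fin d → ℝ) (hL : ∀ i, 0 < L i) :
    (2*π)^(-(d:ℝ)/2) * (∏ i, L i)^(-(1:ℝ)/2) = ∏ i, (2*π*L i)^(-(1:ℝ)/2) := by
  have hπ := Real.pi_pos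
  have h1 : ∀ i : Fin d, (2*π*L i)^(-(1:ℝ)/2) = (2*π)^(-(1:ℝ)/2) * (L i)^(-(1:ℝ)/2) :=
    fun i => Real.mul_rpow (by positivity) (hL i).le
  rw [Finset.prod_congr rfl (fun i _ => h1 i), Finset.prod_mul_distrib,
    Finset.prod_const, Real.finset_prod_rpow _ _ (fun i _ => (hL i).le),
    Finset.card_univ, Fintype.card_fin, ← Real.rpow_natCast ((2*π)^(-(1:ℝ)/2)) d,
    ← Real.rpow_mul (by positivity)]
  congr 1
  ring

lemma gaussianDensity_eval {d : ℕ} (μ0 : EuclideanSpace ℝ (Fin d))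
    (S : Matrix (Fin d) (Fin d) ℝ) (x u : Fin d → ℝ) (hu : x - (fun i => μ0 i) = u) :
    gaussianDensity μ0 S (es x)
      = (2 * π) ^ (-(d : ℝ) / 2) * S.det ^ (-(1 : ℝ) / 2) *
        Real.exp (-(1 / 2) * (u ⬝ᵥ (S⁻¹ *ᵥ u))) := by
  rw [← hu]; rfl

lemma rbf_eval {d : ℕ} (σ : ℝ) (u v : Fin d → ℝ) :
    rbfKernel σ (es u) (es v) = Real.exp (-((u - v) ⬝ᵥ (u - v)) / (2*σ^2)) := by
  have h : ‖es u - es v‖^2 = (u - v) ⬝ᵥ (u - v) := by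
    rw [EuclideanSpace.norm_eq, Real.sq_sqrt (by positivity)]
    simp [dotProduct, es, sq_abs, sq]
  rw [rbfKernel, h]

lemma posDef_A {d : ℕ} (σ : ℝ) (hσ : 0 < σ) (S : Matrix (Fin d) (Fin d) ℝ)
    (hS : S.PosDef) : ((2 * (1 / σ ^ 2)) • S + 1).PosDef := by
  have hc : (0:ℝ) < 2 * (1 / σ ^ 2) := by positivity
  have hsmul : ((2 * (1 / σ ^ 2)) • S).PosDef := by
    refine Matrix.PosDef.of_dotProduct_mulVec_pos ?_ ?_
    · rw [Matrix.IsHermitian, Matrix.conjTranspose_smul, star_trivial, hS.1.eq]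
    · intro x hx
      have h2 := hS.dotProduct_mulVec_pos hx
      simp only [Matrix.smul_mulVec, dotProduct_smul, smul_eq_mul] at *
      exact mul_pos hc h2
  exact hsmul.add Matrix.PosDef.one

/-- Core computation: the cross integral for two Gaussians with common covariance. -/
lemma core {d : ℕ} (σ : ℝ) (hσ : 0 < σ) (m₁ m₂ : EuclideanSpace ℝ (Fin d))
    (S : Matrix (Fin d) (Fin d) ℝ) (hS : S.PosDef) :
    (∫ x, ∫ y, rbfKernel σ x y * gaussianDensity m₁ S x * gaussianDensity m₂ S y)
      = (((2 * (1 / σ ^ 2)) • S + 1).det) ^ (-(1:ℝ)/2) *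
        Real.exp (-(1 / (2 * σ ^ 2)) *
          ((m₁ - m₂) ⬝ᵥ (((2 * (1 / σ ^ 2)) • S + 1)⁻¹ *ᵥ (m₁ - m₂)))) := by
  have hπ := Real.pi_pos
  set Q : Matrix (Fin d) (Fin d) ℝ := (hS.1.eigenvectorUnitary : Matrix (Fin d) (Fin d) ℝ)
    with hQdef
  set L : Fin d → ℝ := hS.1.eigenvalues with hLdef
  have hL : ∀ i, 0 < L i := hS.eigenvalues_pos
  have hQQt : Q * Qᵀ = 1 := by
    have := (Matrix.mem_unitaryGroup_iff).mp (hS.1.eigenvectorUnitary).2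
    rwa [Matrix.star_eq_conjTranspose, Matrix.conjTranspose_eq_transpose_of_trivial] at this
  have hQtQ : Qᵀ * Q = 1 := by
    have := (Matrix.mem_unitaryGroup_iff').mp (hS.1.eigenvectorUnitary).2
    rwa [Matrix.star_eq_conjTranspose, Matrix.conjTranspose_eq_transpose_of_trivial] at this
  have hSpec : S = Q * diagonal L * Qᵀ := by
    simpa [Matrix.star_eq_conjTranspose] using hS.1.spectral_theorem
  have hdetS : S.det = ∏ i, L i := by simpa using hS.1.det_eq_prod_eigenvalues
  have hdetQmul : Q.det * Q.det = 1 := by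
    have := congrArg Matrix.det hQQt
    rwa [Matrix.det_mul, Matrix.det_transpose, Matrix.det_one] at this
  have hdetQ : |Q.det| = 1 := by
    rcases mul_self_eq_one_iff.mp hdetQmul with h | h <;> simp [h]
  set a : Fin d → ℝ := Qᵀ *ᵥ m₁ with hadef
  set b : Fin d → ℝ := Qᵀ *ᵥ m₂ with hbdef
  set M : Fin d → ℝ := fun i => 2*(1/σ^2)*L i + 1 with hMdef
  have hM : ∀ i, 0 < M i := by
    intro i
    have := hL i
    simp only [hMdef]
    positivity
  have hSinv : S⁻¹ = Q * diagonal (fun i => (L i)⁻¹) * Qᵀ := by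
    apply Matrix.inv_eq_right_inv
    rw [hSpec, sandwich_mul Q hQtQ]
    have : (L * fun i => (L i)⁻¹) = 1 := by
      funext i
      exact mul_inv_cancel₀ (hL i).ne'
    rw [this]
    rw [show (diagonal (1 : Fin d → ℝ) : Matrix (Fin d) (Fin d) ℝ) = 1 from Matrix.diagonal_one,
      mul_one, hQQt]
  have hA : (2 * (1/σ^2)) • S + 1 = Q * diagonal M * Qᵀ := by
    have h1 : diagonal M = (2*(1/σ^2)) • diagonal L + 1 := by
      ext i j
      by_cases h : i = j
      · subst h; simp [hMdef, Matrix.diagonal_apply_eq, Matrix.one_apply_eq]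
      · simp [Matrix.diagonal_apply_ne _ h, Matrix.one_apply_ne h]
    rw [hSpec, h1, Matrix.mul_add, Matrix.add_mul, Matrix.mul_one, hQQt, Matrix.mul_smul,
      Matrix.smul_mul]
  have hdetA : ((2 * (1/σ^2)) • S + 1).det = ∏ i, M i := by
    rw [hA, Matrix.det_mul, Matrix.det_mul, Matrix.det_transpose, Matrix.det_diagonal]
    linear_combination (∏ i, M i) * hdetQmul
  have hAinv : ((2 * (1/σ^2)) • S + 1)⁻¹ = Q * diagonal (fun i => (M i)⁻¹) * Qᵀ := by
    apply Matrix.inv_eq_right_inv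
    rw [hA, sandwich_mul Q hQtQ]
    have : (M * fun i => (M i)⁻¹) = 1 := by
      funext i
      exact mul_inv_cancel₀ (hM i).ne'
    rw [this]
    rw [show (diagonal (1 : Fin d → ℝ) : Matrix (Fin d) (Fin d) ℝ) = 1 from Matrix.diagonal_one,
      mul_one, hQQt]
  have hab : Qᵀ *ᵥ (m₁ - m₂) = a - b := by
    funext i
    simp [hadef, hbdef, Matrix.mulVec, dotProduct, mul_sub, Finset.sum_sub_distrib]
  have hqf : (m₁ - m₂) ⬝ᵥ (((2 * (1/σ^2)) • S + 1)⁻¹ *ᵥ (m₁ - m₂))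
      = ∑ i, (M i)⁻¹ * (a i - b i)^2 := by
    rw [hAinv, qf_eq, WithLp.ofLp_sub, hab]
    exact Finset.sum_congr rfl (fun i _ => by simp [Pi.sub_apply])
  -- per-coordinate densities
  have hQa : Q *ᵥ a = (fun i => m₁ i) := by
    rw [hadef, Matrix.mulVec_mulVec, hQQt, Matrix.one_mulVec]
  have hQb : Q *ᵥ b = (fun i => m₂ i) := by
    rw [hbdef, Matrix.mulVec_mulVec, hQQt, Matrix.one_mulVec]
  have hgd₁ : ∀ x : Fin d → ℝ, gaussianDensity m₁ S (es (Q *ᵥ x))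
      = ∏ i, ((2*π*L i)^(-(1:ℝ)/2) * Real.exp (-(x i - a i)^2/(2*L i))) := by
    intro x
    rw [gaussianDensity_eval m₁ S (Q *ᵥ x) (Q *ᵥ (x - a))
      (by rw [Matrix.mulVec_sub, hQa])]
    rw [hSinv, qf_eq, mulVec_orth_cancel Q hQtQ, hdetS, constSplit L hL,
      Finset.mul_sum, Real.exp_sum, ← Finset.prod_mul_distrib]
    refine Finset.prod_congr rfl fun i _ => ?_
    simp only [Pi.sub_apply]
    ring_nf
  have hgd₂ : ∀ y : Fin d → ℝ, gaussianDensity m₂ S (es (Q *ᵥ y))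
      = ∏ i, ((2*π*L i)^(-(1:ℝ)/2) * Real.exp (-(y i - b i)^2/(2*L i))) := by
    intro y
    rw [gaussianDensity_eval m₂ S (Q *ᵥ y) (Q *ᵥ (y - b))
      (by rw [Matrix.mulVec_sub, hQb])]
    rw [hSinv, qf_eq, mulVec_orth_cancel Q hQtQ, hdetS, constSplit L hL,
      Finset.mul_sum, Real.exp_sum, ← Finset.prod_mul_distrib]
    refine Finset.prod_congr rfl fun i _ => ?_
    simp only [Pi.sub_apply]
    ring_nf
  have hrbf : ∀ x y : Fin d → ℝ, rbfKernel σ (es (Q *ᵥ x)) (es (Q *ᵥ y))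
      = ∏ i, Real.exp (-(x i - y i)^2/(2*σ^2)) := by
    intro x y
    rw [rbf_eval]
    have h1 : (Q *ᵥ x - Q *ᵥ y) = Q *ᵥ (x - y) := (Matrix.mulVec_sub Q x y).symm
    rw [h1, dot_orth Q hQtQ]
    have h2 : (x - y) ⬝ᵥ (x - y) = ∑ i, (x i - y i)^2 := by
      simp [dotProduct, sq]
    rw [h2]
    rw [show (-(∑ i, (x i - y i)^2) / (2*σ^2)) = ∑ i, (-(x i - y i)^2/(2*σ^2)) by
      rw [← Finset.sum_neg_distrib, Finset.sum_div]]
    exact Real.exp_sum _ _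
  have hpoint : ∀ x y : Fin d → ℝ,
      rbfKernel σ (es (Q *ᵥ x)) (es (Q *ᵥ y)) * gaussianDensity m₁ S (es (Q *ᵥ x)) *
        gaussianDensity m₂ S (es (Q *ᵥ y))
      = ∏ i, (Real.exp (-(x i - y i)^2/(2*σ^2)) *
          ((2*π*L i)^(-(1:ℝ)/2) * Real.exp (-(x i - a i)^2/(2*L i))) *
          ((2*π*L i)^(-(1:ℝ)/2) * Real.exp (-(y i - b i)^2/(2*L i)))) := by
    intro x y
    rw [hrbf, hgd₁, hgd₂, ← Finset.prod_mul_distrib, ← Finset.prod_mul_distrib]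
  -- assemble the integral
  have key : (∫ x, ∫ y, rbfKernel σ x y * gaussianDensity m₁ S x * gaussianDensity m₂ S y)
      = ∏ i, ∫ s : ℝ, ∫ t : ℝ, Real.exp (-(s-t)^2/(2*σ^2)) *
          ((2*π*L i)^(-(1:ℝ)/2) * Real.exp (-(s - a i)^2/(2*L i))) *
          ((2*π*L i)^(-(1:ℝ)/2) * Real.exp (-(t - b i)^2/(2*L i))) := by
    rw [integral_euclidean_eq_pi (fun x => ∫ y, rbfKernel σ x y *
      gaussianDensity m₁ S x * gaussianDensity m₂ S y)]
    rw [← integral_comp_mulVec Q Qᵀ hQQt hdetQ (fun x => ∫ y,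
      rbfKernel σ (es x) y * gaussianDensity m₁ S (es x) * gaussianDensity m₂ S y)]
    have hxfix : ∀ x : Fin d → ℝ,
        (∫ y, rbfKernel σ (es (Q *ᵥ x)) y * gaussianDensity m₁ S (es (Q *ᵥ x)) *
          gaussianDensity m₂ S y)
        = ∫ y : Fin d → ℝ, ∏ i, (Real.exp (-(x i - y i)^2/(2*σ^2)) *
            ((2*π*L i)^(-(1:ℝ)/2) * Real.exp (-(x i - a i)^2/(2*L i))) *
            ((2*π*L i)^(-(1:ℝ)/2) * Real.exp (-(y i - b i)^2/(2*L i)))) := by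
      intro x
      rw [integral_euclidean_eq_pi (fun y => rbfKernel σ (es (Q *ᵥ x)) y *
        gaussianDensity m₁ S (es (Q *ᵥ x)) * gaussianDensity m₂ S y)]
      rw [← integral_comp_mulVec Q Qᵀ hQQt hdetQ (fun y =>
        rbfKernel σ (es (Q *ᵥ x)) (es y) * gaussianDensity m₁ S (es (Q *ᵥ x)) *
          gaussianDensity m₂ S (es y))]
      exact integral_congr_ae (Filter.Eventually.of_forall (fun y => hpoint x y))
    simp_rw [hxfix]
    exact prod_double (fun i s t => Real.exp (-(s-t)^2/(2*σ^2)) *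
      ((2*π*L i)^(-(1:ℝ)/2) * Real.exp (-(s - a i)^2/(2*L i))) *
      ((2*π*L i)^(-(1:ℝ)/2) * Real.exp (-(t - b i)^2/(2*L i))))
  rw [key]
  have honeD : ∀ i : Fin d, (∫ s : ℝ, ∫ t : ℝ, Real.exp (-(s-t)^2/(2*σ^2)) *
          ((2*π*L i)^(-(1:ℝ)/2) * Real.exp (-(s - a i)^2/(2*L i))) *
          ((2*π*L i)^(-(1:ℝ)/2) * Real.exp (-(t - b i)^2/(2*L i))))
      = (M i)^(-(1:ℝ)/2) * Real.exp (-(1/(2*σ^2)) * ((a i - b i)^2 * (1/(M i)))) := by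
    intro i
    exact oneD σ (L i) (a i) (b i) hσ (hL i)
  rw [Finset.prod_congr rfl (fun i _ => honeD i), Finset.prod_mul_distrib,
    Real.finset_prod_rpow _ _ (fun i _ => (hM i).le), ← Real.exp_sum, ← hdetA, hqf,
    Finset.mul_sum]
  congr 2
  apply Finset.sum_congr rfl
  intro i _
  ring

theorem mmd_gaussian_mean (d : ℕ) (hd : 1 ≤ d) (σ : ℝ) (hσ : 0 < σ)
    (μ μstar : EuclideanSpace ℝ (Fin d)) (S : Matrix (Fin d) (Fin d) ℝ) (hS : S.PosDef) :
    mmd σ (gaussianDensity μ S) (gaussianDensity μstar S)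
      = 2 / Real.sqrt (((2 * (1 / σ ^ 2)) • S + 1).det) *
        (1 - Real.exp (-(1 / (2 * σ ^ 2)) *
          ((μ - μstar) ⬝ᵥ (((2 * (1 / σ ^ 2)) • S + 1)⁻¹ *ᵥ (μ - μstar))))) := by
  have hdet : 0 < ((2 * (1 / σ ^ 2)) • S + 1).det := (posDef_A σ hσ S hS).det_pos
  have hzero : ∀ m : EuclideanSpace ℝ (Fin d),
      (m - m) ⬝ᵥ (((2 * (1 / σ ^ 2)) • S + 1)⁻¹ *ᵥ (m - m)) = 0 := by
    intro m
    rw [sub_self]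
    exact zero_dotProduct _
  rw [mmd, core σ hσ μ μ S hS, core σ hσ μstar μstar S hS, core σ hσ μ μstar S hS,
    hzero μ, hzero μstar]
  rw [show (-(1:ℝ)/2) = -(1/2) by norm_num, Real.rpow_neg hdet.le, ← Real.sqrt_eq_rpow]
  simp only [mul_zero, Real.exp_zero]
  have hs : Real.sqrt (((2 * (1 / σ ^ 2)) • S + 1).det) ≠ 0 := by positivity
  field_simp
  ring
end

section
/- Let d ≥ 1, let σ > 0, let ε > 0, and let a, a* ∈ ℝ^d. Then MMD(N(·; 0, aaᵀ+ε²I), N(·; 0, a*a*ᵀ+ε²I)) = det((1/σ²)(2aaᵀ + 2ε²I) + I)^{-1/2} + det((1/σ²)(2a*a*ᵀ + 2ε²I) + I)^{-1/2} − 2 det((1/σ²)(aaᵀ + a*a*ᵀ + 2ε²I) + I)^{-1/2}. -/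
open MeasureTheory Matrix Real

variable {d : ℕ}

lemma det_toEuclideanLin (M : Matrix (Fin d) (Fin d) ℝ) :
    LinearMap.det (Matrix.toEuclideanLin M) = M.det := by
  have : Matrix.toEuclideanLin M =
      ((WithLp.linearEquiv 2 ℝ (Fin d → ℝ)).symm.conj (Matrix.toLin' M)) := by
    ext x; rfl
  rw [this, LinearEquiv.conj_apply, LinearMap.comp_assoc, LinearMap.det_conj, LinearMap.det_toLin']

lemma integral_comp_toEuclideanLin (M : Matrix (Fin d) (Fin d) ℝ) (hM : M.det ≠ 0)
    (f : EuclideanSpace ℝ (Fin d) → ℝ) (hf : Continuous f) :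
    ∫ x : EuclideanSpace ℝ (Fin d), f (Matrix.toEuclideanLin M x)
      = |M.det|⁻¹ * ∫ x : EuclideanSpace ℝ (Fin d), f x := by
  have hdet : LinearMap.det (Matrix.toEuclideanLin M) ≠ 0 := by
    rw [det_toEuclideanLin]; exact hM
  have hmap := Measure.map_linearMap_addHaar_eq_smul_addHaar
    (volume : Measure (EuclideanSpace ℝ (Fin d))) hdet
  have h1 : ∫ x : EuclideanSpace ℝ (Fin d), f (Matrix.toEuclideanLin M x)
      = ∫ y, f y ∂(Measure.map (Matrix.toEuclideanLin M) volume) := by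
    rw [integral_map]
    · exact ((Matrix.toEuclideanLin M).continuous_of_finiteDimensional).aemeasurable
    · rw [hmap]
      exact (hf.aestronglyMeasurable).smul_measure _
  rw [h1, hmap, det_toEuclideanLin, integral_smul_measure, ENNReal.toReal_ofReal (by positivity),
    abs_inv, smul_eq_mul]

lemma dotProduct_self_eq_norm_sq (u : EuclideanSpace ℝ (Fin d)) :
    ‖u‖ ^ 2 = u ⬝ᵥ u := by
  rw [EuclideanSpace.norm_eq, Real.sq_sqrt (by positivity)]
  simp [dotProduct, sq]

lemma posSemidef_det_nonneg {P : Matrix (Fin d) (Fin d) ℝ} (hPs : P.PosSemidef) :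
    0 ≤ P.det := by
  rw [hPs.isHermitian.det_eq_prod_eigenvalues]
  exact Finset.prod_nonneg fun i _ => hPs.eigenvalues_nonneg i

lemma rpow_neg_half (x : ℝ) (hx : 0 ≤ x) : x ^ (-(1:ℝ)/2) = (Real.sqrt x)⁻¹ := by
  rw [Real.sqrt_eq_rpow, neg_div, Real.rpow_neg hx]

open scoped MatrixOrder

lemma integral_exp_neg_quad (Q : Matrix (Fin d) (Fin d) ℝ) (hQ : Q.PosDef) :
    ∫ x : EuclideanSpace ℝ (Fin d), rexp (-(1/2) * (x ⬝ᵥ Q *ᵥ x))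
      = (2 * π) ^ ((d : ℝ)/2) * Q.det ^ (-(1:ℝ)/2) := by
  set P := CFC.sqrt Q with hP
  have hPs : P.PosSemidef := (CFC.sqrt_nonneg Q).posSemidef
  have hPP : P * P = Q := CFC.sqrt_mul_sqrt_self Q hQ.posSemidef.nonneg
  have hPt : Pᵀ = P := (Matrix.conjTranspose_eq_transpose_of_trivial P).symm.trans
    hPs.isHermitian
  have hdetQ : 0 < Q.det := hQ.det_pos
  have hdetP : P.det * P.det = Q.det := by rw [← Matrix.det_mul, hPP]
  have hPnn : 0 ≤ P.det := posSemidef_det_nonneg hPs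
  have hdetP' : P.det = Real.sqrt Q.det := by
    rw [← hdetP, Real.sqrt_mul_self hPnn]
  have hPd : P.det ≠ 0 := by rw [hdetP']; positivity
  have key : ∀ x : EuclideanSpace ℝ (Fin d),
      rexp (-(1/2) * (x ⬝ᵥ Q *ᵥ x)) = rexp (-(1/2) * ‖(Matrix.toEuclideanLin P) x‖^2) := by
    intro x
    congr 2
    have h0 : ((Matrix.toEuclideanLin P) x : Fin d → ℝ) = P *ᵥ x := rfl
    rw [dotProduct_self_eq_norm_sq, h0, ← hPP, ← Matrix.mulVec_mulVec,
      Matrix.dotProduct_mulVec x P, ← Matrix.mulVec_transpose, hPt]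
  simp_rw [key]
  have h2 : (∫ x : EuclideanSpace ℝ (Fin d), rexp (-(1/2) * ‖(Matrix.toEuclideanLin P) x‖^2))
      = |P.det|⁻¹ * ∫ u : EuclideanSpace ℝ (Fin d), rexp (-(1/2) * ‖u‖^2) :=
    integral_comp_toEuclideanLin P hPd (fun u => rexp (-(1/2) * ‖u‖^2))
      (by fun_prop)
  rw [h2, GaussianFourier.integral_rexp_neg_mul_sq_norm (by norm_num : (0:ℝ) < 1/2),
    finrank_euclideanSpace_fin, abs_of_nonneg hPnn, hdetP', rpow_neg_half _ hdetQ.le]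
  rw [show π / (1/2 : ℝ) = 2 * π by ring]
  ring

lemma complete_square (Q : Matrix (Fin d) (Fin d) ℝ) (hQ : Q.PosDef) (b : Fin d → ℝ)
    (x : Fin d → ℝ) :
    -(1/2) * ((x + Q⁻¹ *ᵥ b) ⬝ᵥ Q *ᵥ (x + Q⁻¹ *ᵥ b)) + b ⬝ᵥ (x + Q⁻¹ *ᵥ b)
      = -(1/2) * (x ⬝ᵥ Q *ᵥ x) + (1/2) * (b ⬝ᵥ Q⁻¹ *ᵥ b) := by
  have hQt : Qᵀ = Q := (Matrix.conjTranspose_eq_transpose_of_trivial Q).symm.trans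
    hQ.isHermitian
  have hQm : Q *ᵥ (Q⁻¹ *ᵥ b) = b := by
    rw [Matrix.mulVec_mulVec, Matrix.mul_nonsing_inv Q (isUnit_iff_ne_zero.mpr hQ.det_pos.ne'),
      Matrix.one_mulVec]
  have h1 : (Q⁻¹ *ᵥ b) ⬝ᵥ Q *ᵥ x = b ⬝ᵥ x := by
    rw [Matrix.dotProduct_mulVec, ← Matrix.mulVec_transpose, hQt, hQm]
  have h2 : x ⬝ᵥ Q *ᵥ (Q⁻¹ *ᵥ b) = b ⬝ᵥ x := by
    rw [hQm, dotProduct_comm]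
  have h3 : (Q⁻¹ *ᵥ b) ⬝ᵥ Q *ᵥ (Q⁻¹ *ᵥ b) = b ⬝ᵥ Q⁻¹ *ᵥ b := by
    rw [hQm, dotProduct_comm]
  rw [Matrix.mulVec_add, dotProduct_add, add_dotProduct, add_dotProduct, dotProduct_add,
    h1, h2, h3]
  ring

lemma integral_exp_neg_quad_add (Q : Matrix (Fin d) (Fin d) ℝ) (hQ : Q.PosDef) (b : Fin d → ℝ) :
    ∫ x : EuclideanSpace ℝ (Fin d), rexp (-(1/2) * (x ⬝ᵥ Q *ᵥ x) + b ⬝ᵥ x)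
      = (2 * π) ^ ((d : ℝ)/2) * Q.det ^ (-(1:ℝ)/2) * rexp ((1/2) * (b ⬝ᵥ Q⁻¹ *ᵥ b)) := by
  set m : EuclideanSpace ℝ (Fin d) := (WithLp.equiv 2 (Fin d → ℝ)).symm (Q⁻¹ *ᵥ b) with hm
  have htrans : ∫ x : EuclideanSpace ℝ (Fin d), rexp (-(1/2) * (x ⬝ᵥ Q *ᵥ x) + b ⬝ᵥ x)
      = ∫ x : EuclideanSpace ℝ (Fin d),
          rexp (-(1/2) * ((x + m) ⬝ᵥ Q *ᵥ (x + m)) + b ⬝ᵥ (x + m)) :=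
    (MeasureTheory.integral_add_right_eq_self
      (fun x : EuclideanSpace ℝ (Fin d) => rexp (-(1/2) * (x ⬝ᵥ Q *ᵥ x) + b ⬝ᵥ x)) m).symm
  rw [htrans]
  have key : ∀ x : EuclideanSpace ℝ (Fin d),
      rexp (-(1/2) * ((x + m) ⬝ᵥ Q *ᵥ (x + m)) + b ⬝ᵥ (x + m))
        = rexp ((1/2) * (b ⬝ᵥ Q⁻¹ *ᵥ b)) * rexp (-(1/2) * (x ⬝ᵥ Q *ᵥ x)) := by
    intro x
    rw [← Real.exp_add]
    congr 1
    have := complete_square Q hQ b (x : Fin d → ℝ)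
    calc -(1/2) * ((x + m) ⬝ᵥ Q *ᵥ (x + m)) + b ⬝ᵥ (x + m)
        = -(1/2) * (x ⬝ᵥ Q *ᵥ x) + (1/2) * (b ⬝ᵥ Q⁻¹ *ᵥ b) := this
      _ = (1/2) * (b ⬝ᵥ Q⁻¹ *ᵥ b) + -(1/2) * (x ⬝ᵥ Q *ᵥ x) := by ring
  simp_rw [key]
  rw [MeasureTheory.integral_const_mul, integral_exp_neg_quad Q hQ]
  ring

lemma posDef_smul {M : Matrix (Fin d) (Fin d) ℝ} (hM : M.PosDef) {c : ℝ} (hc : 0 < c) :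
    (c • M).PosDef := by
  refine Matrix.PosDef.of_dotProduct_mulVec_pos ?_ (fun x hx => ?_)
  · unfold Matrix.IsHermitian
    rw [Matrix.conjTranspose_smul, hM.1.eq]
    congr 1
  · rw [Matrix.smul_mulVec, dotProduct_smul, smul_eq_mul]
    exact mul_pos hc (hM.dotProduct_mulVec_pos hx)

lemma mmd_term (σ : ℝ) (hσ : 0 < σ) (S T : Matrix (Fin d) (Fin d) ℝ)
    (hS : S.PosDef) (hT : T.PosDef) :
    ∫ x : EuclideanSpace ℝ (Fin d), ∫ y : EuclideanSpace ℝ (Fin d),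
        rbfKernel σ x y * gaussianDensity 0 S x * gaussianDensity 0 T y
      = ((1 / σ ^ 2) • (S + T) + 1).det ^ (-(1:ℝ)/2) := by
  set c : ℝ := 1 / σ ^ 2 with hcdef
  have hc : 0 < c := by positivity
  set Qy : Matrix (Fin d) (Fin d) ℝ := T⁻¹ + c • 1 with hQydef
  set U : Matrix (Fin d) (Fin d) ℝ := 1 + c • T with hUdef
  set R : Matrix (Fin d) (Fin d) ℝ := S⁻¹ + c • U⁻¹ with hRdef
  have hSd : IsUnit S.det := hS.det_pos.ne'.isUnit
  have hTd : IsUnit T.det := hT.det_pos.ne'.isUnit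
  have hQyPD : Qy.PosDef := hT.inv.add (posDef_smul Matrix.PosDef.one hc)
  have hUPD : U.PosDef := Matrix.PosDef.one.add (posDef_smul hT hc)
  have hUd : IsUnit U.det := hUPD.det_pos.ne'.isUnit
  have hRPD : R.PosDef := hS.inv.add (posDef_smul hUPD.inv hc)
  have hQy_eq : Qy = T⁻¹ * U := by
    rw [hQydef, hUdef, Matrix.mul_add, Matrix.mul_one, Matrix.mul_smul,
      Matrix.nonsing_inv_mul T hTd]
  have hQyinv : Qy⁻¹ = U⁻¹ * T := by
    rw [hQy_eq, Matrix.mul_inv_rev, Matrix.nonsing_inv_nonsing_inv T hTd]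
  have hsub : c • (1 : Matrix (Fin d) (Fin d) ℝ) - (c * c) • Qy⁻¹ = c • U⁻¹ := by
    have h1 : (1 : Matrix (Fin d) (Fin d) ℝ) - c • (U⁻¹ * T) = U⁻¹ * (U - c • T) := by
      rw [Matrix.mul_sub, Matrix.nonsing_inv_mul U hUd, Matrix.mul_smul]
    have h2 : U - c • T = 1 := by rw [hUdef, add_sub_cancel_right]
    rw [hQyinv, show (c * c) • (U⁻¹ * T) = c • (c • (U⁻¹ * T)) by rw [smul_smul],
      ← smul_sub, h1, h2, Matrix.mul_one]
  have hdet : S.det * T.det * Qy.det * R.det = (c • (S + T) + 1).det := by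
    have hSR : S * R = 1 + c • (S * U⁻¹) := by
      rw [hRdef, Matrix.mul_add, Matrix.mul_nonsing_inv S hSd, Matrix.mul_smul]
    have hTQ : T * Qy = U := by
      rw [hQy_eq, ← Matrix.mul_assoc, Matrix.mul_nonsing_inv T hTd, Matrix.one_mul]
    have : S.det * T.det * Qy.det * R.det = ((S * R) * (T * Qy)).det := by
      rw [Matrix.det_mul, Matrix.det_mul, Matrix.det_mul]; ring
    rw [this, hSR, hTQ, Matrix.add_mul, Matrix.one_mul, Matrix.smul_mul,
      Matrix.mul_assoc, Matrix.nonsing_inv_mul U hUd, Matrix.mul_one, hUdef, smul_add]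
    congr 1
    abel
  -- scalar exponent identity for the inner (y) integral
  have hInnerExp : ∀ x y : Fin d → ℝ,
      -((x - y) ⬝ᵥ (x - y)) / (2 * σ ^ 2) + -(1/2) * (y ⬝ᵥ T⁻¹ *ᵥ y)
        = -(1/2) * (y ⬝ᵥ Qy *ᵥ y) + (c • x) ⬝ᵥ y + -(1/2) * (c * (x ⬝ᵥ x)) := by
    intro x y
    have e1 : (x - y) ⬝ᵥ (x - y) = x ⬝ᵥ x - 2 * (x ⬝ᵥ y) + y ⬝ᵥ y := by
      rw [sub_dotProduct, dotProduct_sub, dotProduct_sub, dotProduct_comm y x]; ring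
    have e2 : y ⬝ᵥ Qy *ᵥ y = y ⬝ᵥ T⁻¹ *ᵥ y + c * (y ⬝ᵥ y) := by
      rw [hQydef, Matrix.add_mulVec, dotProduct_add, Matrix.smul_mulVec,
        Matrix.one_mulVec, dotProduct_smul, smul_eq_mul]
    have e3 : (c • x) ⬝ᵥ y = c * (x ⬝ᵥ y) := by
      rw [smul_dotProduct, smul_eq_mul]
    rw [e1, e2, e3, hcdef]
    have hσ2 : σ ^ 2 ≠ 0 := by positivity
    field_simp
    ring
  have hOuterExp : ∀ x : Fin d → ℝ,
      (1/2) * ((c • x) ⬝ᵥ Qy⁻¹ *ᵥ (c • x)) + -(1/2) * (c * (x ⬝ᵥ x)) + -(1/2) * (x ⬝ᵥ S⁻¹ *ᵥ x)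
        = -(1/2) * (x ⬝ᵥ R *ᵥ x) := by
    intro x
    have e1 : (c • x) ⬝ᵥ Qy⁻¹ *ᵥ (c • x) = c * c * (x ⬝ᵥ Qy⁻¹ *ᵥ x) := by
      rw [smul_dotProduct, Matrix.mulVec_smul, dotProduct_smul, smul_eq_mul, smul_eq_mul]; ring
    have e2 : c * (x ⬝ᵥ x) - c * c * (x ⬝ᵥ Qy⁻¹ *ᵥ x) = c * (x ⬝ᵥ U⁻¹ *ᵥ x) := by
      have := congrArg (fun M : Matrix (Fin d) (Fin d) ℝ => x ⬝ᵥ M *ᵥ x) hsub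
      simpa only [Matrix.sub_mulVec, dotProduct_sub, Matrix.smul_mulVec,
        Matrix.one_mulVec, dotProduct_smul, smul_eq_mul] using this
    have e3 : x ⬝ᵥ R *ᵥ x = x ⬝ᵥ S⁻¹ *ᵥ x + c * (x ⬝ᵥ U⁻¹ *ᵥ x) := by
      rw [hRdef, Matrix.add_mulVec, dotProduct_add, Matrix.smul_mulVec,
        dotProduct_smul, smul_eq_mul]
    rw [e1, e3]
    linear_combination (-(1/2)) * e2
  -- helpers for rearranging exponentials
  have exp_shuffle : ∀ k s t E B CS CT : ℝ, k + t = E + B →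
      rexp k * (CS * rexp s) * (CT * rexp t)
        = ((CS * rexp s) * CT * rexp B) * rexp E := by
    intro k s t E B CS CT h
    have h2 : rexp k * rexp t = rexp B * rexp E := by
      rw [← Real.exp_add, ← Real.exp_add, h]; ring_nf
    linear_combination (CS * rexp s * CT) * h2
  have exp_shuffle2 : ∀ s B L E CS CT K : ℝ, L + B + s = E →
      ((CS * rexp s) * CT * rexp B) * (K * rexp L) = CS * CT * K * rexp E := by
    intro s B L E CS CT K h
    have h2 : rexp s * rexp B * rexp L = rexp E := by
      rw [← Real.exp_add, ← Real.exp_add, show s + B + L = E by linarith]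
    linear_combination (CS * CT * K) * h2
  have hinner : ∀ x : EuclideanSpace ℝ (Fin d),
      (∫ y : EuclideanSpace ℝ (Fin d),
          rbfKernel σ x y * gaussianDensity 0 S x * gaussianDensity 0 T y)
        = ((gaussianDensity 0 S x * ((2 * π) ^ (-(d:ℝ)/2) * T.det ^ (-(1:ℝ)/2))
              * rexp (-(1/2) * (c * (x ⬝ᵥ x))))
            * ((2 * π) ^ ((d : ℝ)/2) * Qy.det ^ (-(1:ℝ)/2)
              * rexp ((1/2) * ((c • (x : Fin d → ℝ)) ⬝ᵥ Qy⁻¹ *ᵥ (c • (x : Fin d → ℝ)))))) := by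
    intro x
    have hrearr : ∀ y : EuclideanSpace ℝ (Fin d),
        rbfKernel σ x y * gaussianDensity 0 S x * gaussianDensity 0 T y
          = (gaussianDensity 0 S x * ((2 * π) ^ (-(d:ℝ)/2) * T.det ^ (-(1:ℝ)/2))
              * rexp (-(1/2) * (c * (x ⬝ᵥ x))))
            * rexp (-(1/2) * (y ⬝ᵥ Qy *ᵥ y) + (c • (x : Fin d → ℝ)) ⬝ᵥ y) := by
      intro y
      simp only [rbfKernel, gaussianDensity, WithLp.ofLp_zero, sub_zero]
      have hk : -‖x - y‖^2 / (2 * σ^2) + -(1/2) * (y ⬝ᵥ T⁻¹ *ᵥ y)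
          = (-(1/2) * (y ⬝ᵥ Qy *ᵥ y) + (c • (x : Fin d → ℝ)) ⬝ᵥ y)
            + -(1/2) * (c * (x ⬝ᵥ x)) := by
        rw [show ‖x - y‖^2
            = ((x - y : EuclideanSpace ℝ (Fin d)) ⬝ᵥ (x - y : EuclideanSpace ℝ (Fin d)))
          from dotProduct_self_eq_norm_sq _]
        exact hInnerExp x y
      exact exp_shuffle _ _ _ _ _ _ _ hk
    simp_rw [hrearr, MeasureTheory.integral_const_mul]
    rw [integral_exp_neg_quad_add Qy hQyPD (c • (x : Fin d → ℝ))]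
  simp_rw [hinner]
  have hrearr2 : ∀ x : EuclideanSpace ℝ (Fin d),
      ((gaussianDensity 0 S x * ((2 * π) ^ (-(d:ℝ)/2) * T.det ^ (-(1:ℝ)/2))
          * rexp (-(1/2) * (c * (x ⬝ᵥ x))))
        * ((2 * π) ^ ((d : ℝ)/2) * Qy.det ^ (-(1:ℝ)/2)
          * rexp ((1/2) * ((c • (x : Fin d → ℝ)) ⬝ᵥ Qy⁻¹ *ᵥ (c • (x : Fin d → ℝ))))))
      = ((2 * π) ^ (-(d:ℝ)/2) * S.det ^ (-(1:ℝ)/2))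
          * ((2 * π) ^ (-(d:ℝ)/2) * T.det ^ (-(1:ℝ)/2))
          * ((2 * π) ^ ((d : ℝ)/2) * Qy.det ^ (-(1:ℝ)/2))
          * rexp (-(1/2) * (x ⬝ᵥ R *ᵥ x)) := by
    intro x
    simp only [gaussianDensity, WithLp.ofLp_zero, sub_zero]
    exact exp_shuffle2 _ _ _ _ _ _ _ (hOuterExp x)
  simp_rw [hrearr2, MeasureTheory.integral_const_mul]
  rw [integral_exp_neg_quad R hRPD]
  have h2π : (0:ℝ) < 2 * π := by positivity
  have e4 : (2 * π) ^ (-(d:ℝ)/2) * (2 * π) ^ ((d:ℝ)/2) = 1 := by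
    rw [← Real.rpow_add h2π, show -(d:ℝ)/2 + (d:ℝ)/2 = 0 by ring, Real.rpow_zero]
  calc ((2 * π) ^ (-(d:ℝ)/2) * S.det ^ (-(1:ℝ)/2))
          * ((2 * π) ^ (-(d:ℝ)/2) * T.det ^ (-(1:ℝ)/2))
          * ((2 * π) ^ ((d : ℝ)/2) * Qy.det ^ (-(1:ℝ)/2))
          * ((2 * π) ^ ((d : ℝ)/2) * R.det ^ (-(1:ℝ)/2))
      = ((2 * π) ^ (-(d:ℝ)/2) * (2 * π) ^ ((d:ℝ)/2))
          * ((2 * π) ^ (-(d:ℝ)/2) * (2 * π) ^ ((d:ℝ)/2))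
          * (S.det ^ (-(1:ℝ)/2) * T.det ^ (-(1:ℝ)/2) * Qy.det ^ (-(1:ℝ)/2)
              * R.det ^ (-(1:ℝ)/2)) := by ring
    _ = S.det ^ (-(1:ℝ)/2) * T.det ^ (-(1:ℝ)/2) * Qy.det ^ (-(1:ℝ)/2)
          * R.det ^ (-(1:ℝ)/2) := by rw [e4]; ring
    _ = (S.det * T.det * Qy.det * R.det) ^ (-(1:ℝ)/2) := by
        rw [Real.mul_rpow
            (mul_nonneg (mul_nonneg hS.det_pos.le hT.det_pos.le) hQyPD.det_pos.le)
            hRPD.det_pos.le,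
          Real.mul_rpow (mul_nonneg hS.det_pos.le hT.det_pos.le) hQyPD.det_pos.le,
          Real.mul_rpow hS.det_pos.le hT.det_pos.le]
    _ = (c • (S + T) + 1).det ^ (-(1:ℝ)/2) := by rw [hdet]

lemma posSemidef_vecMulVec (a : Fin d → ℝ) : (Matrix.vecMulVec a a).PosSemidef := by
  refine Matrix.PosSemidef.of_dotProduct_mulVec_nonneg ?_ ?_
  · unfold Matrix.IsHermitian
    rw [Matrix.conjTranspose_eq_transpose_of_trivial]
    ext i j
    simp [Matrix.vecMulVec_apply, mul_comm]
  · intro x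
    have hmv : Matrix.vecMulVec a a *ᵥ x = (a ⬝ᵥ x) • a := by
      ext i
      simp [Matrix.mulVec, Matrix.vecMulVec_apply, dotProduct, Finset.sum_mul, Finset.mul_sum,
        mul_comm, mul_assoc, mul_left_comm]
    rw [star_trivial, hmv, dotProduct_smul, smul_eq_mul, dotProduct_comm]
    exact mul_self_nonneg _

theorem mmd_gaussian_covariance (d : ℕ) (hd : 1 ≤ d) (σ : ℝ) (hσ : 0 < σ)
    (ε : ℝ) (hε : 0 < ε) (a astar : EuclideanSpace ℝ (Fin d)) :
    mmd σ (gaussianDensity 0 (vecMulVec a a + ε ^ 2 • 1))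
          (gaussianDensity 0 (vecMulVec astar astar + ε ^ 2 • 1))
      = (((1 / σ ^ 2) • ((2 : ℝ) • vecMulVec a a + (2 * ε ^ 2) • 1) + 1).det) ^ (-(1 : ℝ) / 2)
        + (((1 / σ ^ 2) • ((2 : ℝ) • vecMulVec astar astar + (2 * ε ^ 2) • 1) + 1).det) ^ (-(1 : ℝ) / 2)
        - 2 * (((1 / σ ^ 2) • (vecMulVec a a + vecMulVec astar astar + (2 * ε ^ 2) • 1) + 1).det) ^ (-(1 : ℝ) / 2) := by
  set S : Matrix (Fin d) (Fin d) ℝ := vecMulVec a a + ε ^ 2 • 1 with hSdef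
  set T : Matrix (Fin d) (Fin d) ℝ := vecMulVec astar astar + ε ^ 2 • 1 with hTdef
  have hS : S.PosDef :=
    Matrix.PosDef.posSemidef_add (posSemidef_vecMulVec a) (posDef_smul Matrix.PosDef.one (by positivity))
  have hT : T.PosDef :=
    Matrix.PosDef.posSemidef_add (posSemidef_vecMulVec astar) (posDef_smul Matrix.PosDef.one (by positivity))
  have h1 : S + S = (2 : ℝ) • vecMulVec (a : Fin d → ℝ) a + (2 * ε ^ 2) • 1 := by
    rw [hSdef]; module
  have h2 : T + T = (2 : ℝ) • vecMulVec (astar : Fin d → ℝ) astar + (2 * ε ^ 2) • 1 := by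
    rw [hTdef]; module
  have h3 : S + T = vecMulVec (a : Fin d → ℝ) a + vecMulVec (astar : Fin d → ℝ) astar
      + (2 * ε ^ 2) • 1 := by
    rw [hSdef, hTdef]; module
  unfold mmd
  rw [mmd_term σ hσ S S hS hS, mmd_term σ hσ T T hT hT, mmd_term σ hσ S T hS hT, h1, h2, h3]
end

section
/- Let d ≥ 1, let σ > 0, let ε ≥ 0, and let a* ∈ ℝ^d with ‖a*‖ = 1. Define g : ℝ^d → ℝ by g(a) := det((1/σ²)(2aaᵀ + 2ε²I) + I)^{-1/2} + det((1/σ²)(2a*a*ᵀ + 2ε²I) + I)^{-1/2} − 2 det((1/σ²)(aaᵀ + a*a*ᵀ + 2ε²I) + I)^{-1/2}. Then g is differentiable and its gradient is ∇g(a) = −2 det((2/σ²)(aaᵀ + ε²I) + I)^{-3/2} (1/σ²)^d (2ε² + σ²)^{d−1} a + 2 det((1/σ²)(aaᵀ + a*a*ᵀ + 2ε²I) + I)^{-3/2} (1/σ²)^d (1 + 2ε² + σ²)(2ε² + σ²)^{d−1} (a*a*ᵀ + (2ε² + σ²)I)⁻¹ a. -/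
open Matrix

section Helpers

open InnerProductSpace

variable {F : Type*} [NormedAddCommGroup F] [InnerProductSpace ℝ F] [CompleteSpace F]
  {f f₂ : F → ℝ} {v w x b : F}

private lemma hga_add (hf : HasGradientAt f v x) (hg : HasGradientAt f₂ w x) :
    HasGradientAt (fun y => f y + f₂ y) (v + w) x := by
  rw [hasGradientAt_iff_hasFDerivAt] at *
  have h := hf.add hg
  rw [map_add]; exact h

private lemma hga_sub (hf : HasGradientAt f v x) (hg : HasGradientAt f₂ w x) :
    HasGradientAt (fun y => f y - f₂ y) (v - w) x := by
  rw [hasGradientAt_iff_hasFDerivAt] at *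
  have h := hf.sub hg
  rw [map_sub]; exact h

private lemma hga_const_mul (k : ℝ) (hf : HasGradientAt f v x) :
    HasGradientAt (fun y => k * f y) (k • v) x := by
  rw [hasGradientAt_iff_hasFDerivAt] at *
  have h := hf.const_mul k
  rw [map_smul]; exact h

private lemma hga_mul_const (hf : HasGradientAt f v x) (k : ℝ) :
    HasGradientAt (fun y => f y * k) (k • v) x :=
  (hga_const_mul k hf).congr_of_eventuallyEq
    (Filter.Eventually.of_forall fun y => (mul_comm k (f y)).symm)

private lemma hga_const_add (k : ℝ) (hf : HasGradientAt f v x) :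
    HasGradientAt (fun y => k + f y) v x := by
  have h := hga_add (hasGradientAt_const x k) hf
  simpa using h

private lemma hga_comp {h : ℝ → ℝ} {s : ℝ} (hf : HasGradientAt f v x)
    (hh : HasDerivAt h s (f x)) :
    HasGradientAt (fun y => h (f y)) (s • v) x := by
  rw [hasGradientAt_iff_hasFDerivAt] at *
  have h2 := hh.comp_hasFDerivAt x hf
  rw [map_smul]; exact h2

private lemma hga_inner_self : HasGradientAt (fun y : F => (inner ℝ y y)) ((2:ℝ) • x) x := by
  rw [hasGradientAt_iff_hasFDerivAt]
  have h := (hasFDerivAt_id x).inner ℝ (hasFDerivAt_id x)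
  have e : InnerProductSpace.toDual ℝ F ((2:ℝ) • x) = fderivInnerCLM ℝ (id x, id x) ∘L
      ((ContinuousLinearMap.id ℝ F).prod (ContinuousLinearMap.id ℝ F)) := by
    ext y
    simp [toDual_apply_apply, inner_smul_left, fderivInnerCLM_apply, real_inner_comm]
    ring
  rw [e]; exact h

private lemma hga_inner_const : HasGradientAt (fun y : F => (inner ℝ b y)) b x := by
  rw [hasGradientAt_iff_hasFDerivAt]
  have hb : (fun y : F => (inner ℝ b y)) = InnerProductSpace.toDual ℝ F b := by
    funext y; simp [toDual_apply_apply]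
  rw [hb]
  exact (InnerProductSpace.toDual ℝ F b).hasFDerivAt

end Helpers

private lemma vmv_smul (d : ℕ) (t : ℝ) (u v : Fin d → ℝ) :
    vecMulVec (t • u) v = t • vecMulVec u v := by
  ext i j; simp [vecMulVec_apply]; ring

private lemma det1 (d : ℕ) (u : Fin d → ℝ) (t β : ℝ) (hβ : β ≠ 0) :
    (t • vecMulVec u u + β • (1 : Matrix (Fin d) (Fin d) ℝ)).det
      = β ^ d * (1 + t / β * (u ⬝ᵥ u)) := by
  have h : t • vecMulVec u u + β • (1 : Matrix (Fin d) (Fin d) ℝ)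
      = β • (1 + replicateCol Unit ((t / β) • u) * replicateRow Unit u) := by
    rw [← vecMulVec_eq, vmv_smul, smul_add, smul_smul,
      show β * (t / β) = t by field_simp]
    exact add_comm _ _
  rw [h, det_smul, det_one_add_replicateCol_mul_replicateRow]
  simp [Fintype.card_fin, dotProduct_smul]

private lemma det2 (d : ℕ) (u v : Fin d → ℝ) (t β : ℝ) (hβ : β ≠ 0) :
    (t • vecMulVec u u + t • vecMulVec v v + β • (1 : Matrix (Fin d) (Fin d) ℝ)).det
      = β ^ d * ((1 + t / β * (u ⬝ᵥ u)) * (1 + t / β * (v ⬝ᵥ v)) - (t / β * (u ⬝ᵥ v)) ^ 2) := by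
  set A : Matrix (Fin d) (Fin 2) ℝ := Matrix.of fun i k => (t / β) * (if k = 0 then u i else v i) with hA
  set B : Matrix (Fin 2) (Fin d) ℝ := Matrix.of fun k j => if k = 0 then u j else v j with hB
  have h : t • vecMulVec u u + t • vecMulVec v v + β • (1 : Matrix (Fin d) (Fin d) ℝ)
      = β • (1 + A * B) := by
    ext i j
    simp [hA, hB, Matrix.mul_apply, Fin.sum_univ_two, vecMulVec_apply, Matrix.one_apply,
      mul_add, add_mul, Finset.mul_sum]
    split_ifs <;> field_simp <;> ring
  rw [h, det_smul, det_one_add_mul_comm, det_fin_two]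
  have e : ∀ k l : Fin 2, ((1 : Matrix (Fin 2) (Fin 2) ℝ) + B * A) k l
      = (if k = l then 1 else 0)
        + (t / β) * ((if k = 0 then u else v) ⬝ᵥ (if l = 0 then u else v)) := by
    intro k l
    fin_cases k <;> fin_cases l <;>
      simp [hA, hB, Matrix.mul_apply, Matrix.one_apply, dotProduct, Finset.mul_sum] <;>
      (apply Finset.sum_congr rfl; intros; ring)
  rw [e, e, e, e]
  simp [Fintype.card_fin]
  have hc : v ⬝ᵥ u = u ⬝ᵥ v := dotProduct_comm v u
  rw [hc]
  ring_nf
  exact Or.inl trivial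

private lemma sm_inv (d : ℕ) (s : ℝ) (hs : 0 < s) (b : Fin d → ℝ) (hb : b ⬝ᵥ b = 1) :
    (vecMulVec b b + s • (1 : Matrix (Fin d) (Fin d) ℝ))⁻¹
      = (1 / s) • (1 - (1 / (1 + s)) • vecMulVec b b) := by
  apply Matrix.inv_eq_right_inv
  have h1s : (1 : ℝ) + s ≠ 0 := by positivity
  ext i j
  simp only [Matrix.mul_apply, Matrix.add_apply, Matrix.smul_apply, Matrix.sub_apply,
    Matrix.one_apply, vecMulVec_apply, smul_eq_mul, mul_sub, mul_add, add_mul, mul_ite, ite_mul,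
    mul_zero, zero_mul, mul_one, one_mul, Finset.sum_sub_distrib, Finset.sum_add_distrib,
    Finset.sum_ite_eq, Finset.sum_ite_eq', Finset.mem_univ, if_true]
  have hsum : ∑ x : Fin d, b i * b x * (1 / s * (1 / (1 + s) * (b x * b j)))
      = 1 / s * (1 / (1 + s)) * (b i * b j) := by
    rw [Finset.sum_congr rfl (fun x _ => show b i * b x * (1 / s * (1 / (1 + s) * (b x * b j)))
      = 1 / s * (1 / (1 + s)) * (b i * b j) * (b x * b x) by ring), ← Finset.mul_sum,
      show ∑ x : Fin d, b x * b x = 1 from hb, mul_one]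
  rw [hsum]
  split_ifs with h <;> field_simp <;> ring

set_option maxHeartbeats 2000000 in
theorem mmd_covariance_gradient (d : ℕ) (hd : 1 ≤ d) (σ : ℝ) (hσ : 0 < σ)
    (ε : ℝ) (hε : 0 ≤ ε) (astar : EuclideanSpace ℝ (Fin d)) (hastar : ‖astar‖ = 1)
    (g : EuclideanSpace ℝ (Fin d) → ℝ)
    (hg : g = fun a : EuclideanSpace ℝ (Fin d) =>
      (((1 / σ ^ 2) • ((2 : ℝ) • vecMulVec a a + (2 * ε ^ 2) • 1) + 1).det) ^ (-(1 : ℝ) / 2)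
      + (((1 / σ ^ 2) • ((2 : ℝ) • vecMulVec astar astar + (2 * ε ^ 2) • 1) + 1).det) ^ (-(1 : ℝ) / 2)
      - 2 * (((1 / σ ^ 2) • (vecMulVec a a + vecMulVec astar astar + (2 * ε ^ 2) • 1) + 1).det) ^ (-(1 : ℝ) / 2)) :
    Differentiable ℝ g ∧
    ∀ a : EuclideanSpace ℝ (Fin d),
      gradient g a
        = (-2 * (((2 / σ ^ 2) • (vecMulVec a a + ε ^ 2 • 1) + 1).det) ^ (-(3 : ℝ) / 2) *
            (1 / σ ^ 2) ^ d * (2 * ε ^ 2 + σ ^ 2) ^ (d - 1)) • a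
          + (2 * (((1 / σ ^ 2) • (vecMulVec a a + vecMulVec astar astar + (2 * ε ^ 2) • 1) + 1).det) ^ (-(3 : ℝ) / 2) *
            (1 / σ ^ 2) ^ d * (1 + 2 * ε ^ 2 + σ ^ 2) * (2 * ε ^ 2 + σ ^ 2) ^ (d - 1)) •
            ((WithLp.equiv 2 (Fin d → ℝ)).symm ((vecMulVec astar astar + (2 * ε ^ 2 + σ ^ 2) • (1 : Matrix (Fin d) (Fin d) ℝ))⁻¹ *ᵥ a)) := by
  obtain ⟨m, rfl⟩ : ∃ m, d = m + 1 := ⟨d - 1, (Nat.succ_pred_eq_of_pos hd).symm⟩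
  have hσ2 : σ ^ 2 ≠ 0 := by positivity
  have hSpos : (0:ℝ) < 2 * ε ^ 2 + σ ^ 2 := by positivity
  have hSne : (2 * ε ^ 2 + σ ^ 2 : ℝ) ≠ 0 := ne_of_gt hSpos
  have h1Sne : (1 + (2 * ε ^ 2 + σ ^ 2) : ℝ) ≠ 0 := by positivity
  have hβpos : (0:ℝ) < 2 * (1 / σ ^ 2) * ε ^ 2 + 1 := by positivity
  have hβne : (2 * (1 / σ ^ 2) * ε ^ 2 + 1 : ℝ) ≠ 0 := ne_of_gt hβpos
  have hKpos : (0:ℝ) < (2 * (1 / σ ^ 2) * ε ^ 2 + 1) ^ (m + 1) := pow_pos hβpos _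
  have hinner : ∀ x y : EuclideanSpace ℝ (Fin (m + 1)), (inner ℝ x y) = x ⬝ᵥ y := by
    intro x y
    simp [PiLp.inner_apply, dotProduct, RCLike.inner_apply, conj_trivial]
    exact Finset.sum_congr rfl (fun _ _ => mul_comm _ _)
  have hQ0 : ∀ x : EuclideanSpace ℝ (Fin (m + 1)), 0 ≤ (inner ℝ x x) := fun x =>
    real_inner_self_nonneg
  have hbinner : (inner ℝ astar astar) = 1 := by
    rw [real_inner_self_eq_norm_sq, hastar]; norm_num
  have hbdot : (astar : Fin (m + 1) → ℝ) ⬝ᵥ astar = 1 := by rw [← hinner]; exact hbinner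
  have hCS : ∀ x : EuclideanSpace ℝ (Fin (m + 1)), (inner ℝ astar x) ^ 2 ≤ (inner ℝ x x) := by
    intro x
    have h := real_inner_mul_inner_self_le astar x
    rw [hbinner, one_mul] at h
    nlinarith [h]
  have hM1 : ∀ x : EuclideanSpace ℝ (Fin (m + 1)),
      ((1 / σ ^ 2) • ((2:ℝ) • vecMulVec x x + (2 * ε ^ 2) • 1) + 1
          : Matrix (Fin (m + 1)) (Fin (m + 1)) ℝ)
        = (2 * (1 / σ ^ 2)) • vecMulVec x x + (2 * (1 / σ ^ 2) * ε ^ 2 + 1) • 1 := by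
    intro x; ext i j
    simp [Matrix.add_apply, Matrix.smul_apply, Matrix.one_apply, vecMulVec_apply]
    split_ifs <;> ring
  have hM2 : ∀ x : EuclideanSpace ℝ (Fin (m + 1)),
      ((2 / σ ^ 2) • (vecMulVec x x + ε ^ 2 • 1) + 1 : Matrix (Fin (m + 1)) (Fin (m + 1)) ℝ)
        = (2 * (1 / σ ^ 2)) • vecMulVec x x + (2 * (1 / σ ^ 2) * ε ^ 2 + 1) • 1 := by
    intro x; ext i j
    simp [Matrix.add_apply, Matrix.smul_apply, Matrix.one_apply, vecMulVec_apply]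
    split_ifs <;> ring
  have hM3 : ∀ x : EuclideanSpace ℝ (Fin (m + 1)),
      ((1 / σ ^ 2) • (vecMulVec x x + vecMulVec astar astar + (2 * ε ^ 2) • 1) + 1
          : Matrix (Fin (m + 1)) (Fin (m + 1)) ℝ)
        = (1 / σ ^ 2) • vecMulVec x x + (1 / σ ^ 2) • vecMulVec astar astar
          + (2 * (1 / σ ^ 2) * ε ^ 2 + 1) • 1 := by
    intro x; ext i j
    simp [Matrix.add_apply, Matrix.smul_apply, Matrix.one_apply, vecMulVec_apply]
    split_ifs <;> ring
  have hrw1 : (2 * (1 / σ ^ 2)) / (2 * (1 / σ ^ 2) * ε ^ 2 + 1) = 2 / (2 * ε ^ 2 + σ ^ 2) := by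
    rw [div_eq_div_iff hβne hSne]; field_simp
  have hrw2 : (1 / σ ^ 2) / (2 * (1 / σ ^ 2) * ε ^ 2 + 1) = 1 / (2 * ε ^ 2 + σ ^ 2) := by
    rw [div_eq_div_iff hβne hSne]; field_simp
  have detM1 : ∀ x : EuclideanSpace ℝ (Fin (m + 1)),
      ((1 / σ ^ 2) • ((2:ℝ) • vecMulVec x x + (2 * ε ^ 2) • 1) + 1
          : Matrix (Fin (m + 1)) (Fin (m + 1)) ℝ).det
        = (2 * (1 / σ ^ 2) * ε ^ 2 + 1) ^ (m + 1)
            * (1 + 2 / (2 * ε ^ 2 + σ ^ 2) * (inner ℝ x x)) := by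
    intro x
    rw [hM1 x, det1 (m + 1) x (2 * (1 / σ ^ 2)) _ hβne, hrw1, ← hinner x x]
  have detM2 : ∀ x : EuclideanSpace ℝ (Fin (m + 1)),
      ((2 / σ ^ 2) • (vecMulVec x x + ε ^ 2 • 1) + 1 : Matrix (Fin (m + 1)) (Fin (m + 1)) ℝ).det
        = (2 * (1 / σ ^ 2) * ε ^ 2 + 1) ^ (m + 1)
            * (1 + 2 / (2 * ε ^ 2 + σ ^ 2) * (inner ℝ x x)) := by
    intro x
    rw [hM2 x, det1 (m + 1) x (2 * (1 / σ ^ 2)) _ hβne, hrw1, ← hinner x x]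
  have detM3 : ∀ x : EuclideanSpace ℝ (Fin (m + 1)),
      ((1 / σ ^ 2) • (vecMulVec x x + vecMulVec astar astar + (2 * ε ^ 2) • 1) + 1
          : Matrix (Fin (m + 1)) (Fin (m + 1)) ℝ).det
        = (2 * (1 / σ ^ 2) * ε ^ 2 + 1) ^ (m + 1)
            * ((1 + 1 / (2 * ε ^ 2 + σ ^ 2) * (inner ℝ x x)) * (1 + 1 / (2 * ε ^ 2 + σ ^ 2))
              - (1 / (2 * ε ^ 2 + σ ^ 2) * (inner ℝ astar x)) ^ 2) := by
    intro x
    rw [hM3 x, det2 (m + 1) x astar (1 / σ ^ 2) _ hβne, hrw2, hbdot, mul_one,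
      dotProduct_comm x astar, ← hinner astar x, ← hinner x x]
  have hE1pos : ∀ x : EuclideanSpace ℝ (Fin (m + 1)),
      (0:ℝ) < (2 * (1 / σ ^ 2) * ε ^ 2 + 1) ^ (m + 1)
        * (1 + 2 / (2 * ε ^ 2 + σ ^ 2) * (inner ℝ x x)) := by
    intro x
    have h := hQ0 x
    have h2 : (0:ℝ) < 2 / (2 * ε ^ 2 + σ ^ 2) := by positivity
    apply mul_pos hKpos
    nlinarith
  have hE3pos : ∀ x : EuclideanSpace ℝ (Fin (m + 1)),
      (0:ℝ) < (2 * (1 / σ ^ 2) * ε ^ 2 + 1) ^ (m + 1)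
        * ((1 + 1 / (2 * ε ^ 2 + σ ^ 2) * (inner ℝ x x)) * (1 + 1 / (2 * ε ^ 2 + σ ^ 2))
          - (1 / (2 * ε ^ 2 + σ ^ 2) * (inner ℝ astar x)) ^ 2) := by
    intro x
    have h1 := hQ0 x
    have h2 := hCS x
    have h3 : (0:ℝ) < 1 / (2 * ε ^ 2 + σ ^ 2) := by positivity
    apply mul_pos hKpos
    nlinarith [mul_nonneg (mul_nonneg h3.le h3.le) (sub_nonneg.mpr h2), mul_nonneg h3.le h1]
  set C0 : ℝ := (((1 / σ ^ 2) • ((2:ℝ) • vecMulVec astar astar + (2 * ε ^ 2) • 1) + 1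
      : Matrix (Fin (m + 1)) (Fin (m + 1)) ℝ)).det ^ (-(1:ℝ) / 2) with hC0
  have hgs : g = fun x : EuclideanSpace ℝ (Fin (m + 1)) =>
      ((2 * (1 / σ ^ 2) * ε ^ 2 + 1) ^ (m + 1)
          * (1 + 2 / (2 * ε ^ 2 + σ ^ 2) * (inner ℝ x x))) ^ (-(1:ℝ) / 2)
      + C0
      - 2 * ((2 * (1 / σ ^ 2) * ε ^ 2 + 1) ^ (m + 1)
          * ((1 + 1 / (2 * ε ^ 2 + σ ^ 2) * (inner ℝ x x)) * (1 + 1 / (2 * ε ^ 2 + σ ^ 2))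
            - (1 / (2 * ε ^ 2 + σ ^ 2) * (inner ℝ astar x)) ^ 2)) ^ (-(1:ℝ) / 2) := by
    rw [hg]; funext x; rw [detM1 x, detM3 x]
  have key : ∀ x : EuclideanSpace ℝ (Fin (m + 1)), HasGradientAt g
      (((-(2:ℝ) * (2 * (1 / σ ^ 2) * ε ^ 2 + 1) ^ (m + 1) / (2 * ε ^ 2 + σ ^ 2))
          * ((2 * (1 / σ ^ 2) * ε ^ 2 + 1) ^ (m + 1)
              * (1 + 2 / (2 * ε ^ 2 + σ ^ 2) * (inner ℝ x x))) ^ (-(3:ℝ) / 2)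
        + (2 * (2 * (1 / σ ^ 2) * ε ^ 2 + 1) ^ (m + 1) * (1 + 1 / (2 * ε ^ 2 + σ ^ 2))
              / (2 * ε ^ 2 + σ ^ 2))
          * ((2 * (1 / σ ^ 2) * ε ^ 2 + 1) ^ (m + 1)
              * ((1 + 1 / (2 * ε ^ 2 + σ ^ 2) * (inner ℝ x x)) * (1 + 1 / (2 * ε ^ 2 + σ ^ 2))
                - (1 / (2 * ε ^ 2 + σ ^ 2) * (inner ℝ astar x)) ^ 2)) ^ (-(3:ℝ) / 2)) • x
      + ((-(2:ℝ) * (2 * (1 / σ ^ 2) * ε ^ 2 + 1) ^ (m + 1) * (1 / (2 * ε ^ 2 + σ ^ 2))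
            * (1 / (2 * ε ^ 2 + σ ^ 2)) * (inner ℝ astar x))
          * ((2 * (1 / σ ^ 2) * ε ^ 2 + 1) ^ (m + 1)
              * ((1 + 1 / (2 * ε ^ 2 + σ ^ 2) * (inner ℝ x x)) * (1 + 1 / (2 * ε ^ 2 + σ ^ 2))
                - (1 / (2 * ε ^ 2 + σ ^ 2) * (inner ℝ astar x)) ^ 2)) ^ (-(3:ℝ) / 2)) • astar) x := by
    intro x
    rw [hgs]
    have haff := hga_const_mul ((2 * (1 / σ ^ 2) * ε ^ 2 + 1) ^ (m + 1))
      (hga_const_add 1 (hga_const_mul (2 / (2 * ε ^ 2 + σ ^ 2)) (hga_inner_self (x := x))))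
    have h1 := hga_comp haff
      (Real.hasDerivAt_rpow_const (p := -(1:ℝ) / 2) (Or.inl (hE1pos x).ne'))
    have hGa := hga_mul_const
      (hga_const_add 1 (hga_const_mul (1 / (2 * ε ^ 2 + σ ^ 2)) (hga_inner_self (x := x))))
      (1 + 1 / (2 * ε ^ 2 + σ ^ 2))
    have hsq := hga_comp (hga_inner_const (b := astar) (x := x))
      (((hasDerivAt_id ((inner ℝ astar x))).const_mul (1 / (2 * ε ^ 2 + σ ^ 2))).pow 2)
    have hG := hga_sub hGa hsq
    have hψ := hga_const_mul ((2 * (1 / σ ^ 2) * ε ^ 2 + 1) ^ (m + 1)) hG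
    have h3 := hga_const_mul 2
      (hga_comp hψ (Real.hasDerivAt_rpow_const (p := -(1:ℝ) / 2) (Or.inl (hE3pos x).ne')))
    have htot := hga_sub (hga_add h1 (hasGradientAt_const x C0)) h3
    have hn : (((2:ℕ):ℝ) * (1 / (2 * ε ^ 2 + σ ^ 2) * id (inner ℝ astar x)) ^ (2 - 1)
        * (1 / (2 * ε ^ 2 + σ ^ 2) * 1))
        = 2 * (1 / (2 * ε ^ 2 + σ ^ 2)) * (1 / (2 * ε ^ 2 + σ ^ 2)) * (inner ℝ astar x) := by
      norm_num [id]; ring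
    rw [hn] at htot
    have hexp : (-(1:ℝ) / 2 - 1) = -(3:ℝ) / 2 := by norm_num
    rw [hexp] at htot
    simp only [Pi.pow_apply, id_eq] at htot
    convert htot using 1
    ext i
    simp only [PiLp.add_apply, PiLp.sub_apply, PiLp.smul_apply, PiLp.zero_apply, smul_eq_mul,
      id_eq, add_zero]
    set X1 := ((2 * (1 / σ ^ 2) * ε ^ 2 + 1) ^ (m + 1)
      * (1 + 2 / (2 * ε ^ 2 + σ ^ 2) * (inner ℝ x x))) ^ (-(3:ℝ) / 2) with hX1
    set Y1 := ((2 * (1 / σ ^ 2) * ε ^ 2 + 1) ^ (m + 1)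
      * ((1 + 1 / (2 * ε ^ 2 + σ ^ 2) * (inner ℝ x x)) * (1 + 1 / (2 * ε ^ 2 + σ ^ 2))
        - (1 / (2 * ε ^ 2 + σ ^ 2) * (inner ℝ astar x)) ^ 2)) ^ (-(3:ℝ) / 2) with hY1
    ring
  have hmv : ∀ (x : EuclideanSpace ℝ (Fin (m + 1))) (i : Fin (m + 1)),
      (((1 / (2 * ε ^ 2 + σ ^ 2)) • ((1 : Matrix (Fin (m + 1)) (Fin (m + 1)) ℝ)
        - (1 / (1 + (2 * ε ^ 2 + σ ^ 2))) • vecMulVec astar astar)) *ᵥ x) i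
      = 1 / (2 * ε ^ 2 + σ ^ 2) * (x i - 1 / (1 + (2 * ε ^ 2 + σ ^ 2)) * (inner ℝ astar x) * astar i) := by
    intro x i
    rw [hinner astar x]
    simp only [Matrix.mulVec, dotProduct, Matrix.smul_apply, Matrix.sub_apply, Matrix.one_apply,
      vecMulVec_apply, smul_eq_mul, sub_mul, mul_ite, ite_mul, one_mul, zero_mul, mul_zero,
      mul_one, Finset.sum_sub_distrib, Finset.sum_ite_eq, Finset.mem_univ, if_true, mul_sub]
    congr 1
    rw [Finset.sum_congr rfl (fun j _ => show
        1 / (2 * ε ^ 2 + σ ^ 2) * (1 / (1 + (2 * ε ^ 2 + σ ^ 2)) * (astar i * astar j)) * x j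
        = (1 / (2 * ε ^ 2 + σ ^ 2) * (1 / (1 + (2 * ε ^ 2 + σ ^ 2))) * astar i) * (astar j * x j)
        by ring), ← Finset.mul_sum]
    ring
  refine ⟨fun x => (key x).differentiableAt, fun a => ?_⟩
  rw [(key a).gradient, detM2 a, detM3 a, sm_inv (m + 1) (2 * ε ^ 2 + σ ^ 2) hSpos astar hbdot]
  have hpow : ((2 * (1 / σ ^ 2) * ε ^ 2 + 1) : ℝ) ^ (m + 1)
      = (1 / σ ^ 2) ^ (m + 1) * ((2 * ε ^ 2 + σ ^ 2) ^ m * (2 * ε ^ 2 + σ ^ 2)) := by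
    rw [← pow_succ, ← mul_pow]; congr 1; field_simp
  ext i
  simp only [PiLp.add_apply, PiLp.smul_apply, smul_eq_mul, WithLp.equiv_symm_apply, PiLp.toLp_apply,
    Nat.add_sub_cancel]
  rw [hmv a i]
  set X1 := ((2 * (1 / σ ^ 2) * ε ^ 2 + 1) ^ (m + 1)
    * (1 + 2 / (2 * ε ^ 2 + σ ^ 2) * (inner ℝ a a))) ^ (-(3:ℝ) / 2) with hX1
  set Y1 := ((2 * (1 / σ ^ 2) * ε ^ 2 + 1) ^ (m + 1)
    * ((1 + 1 / (2 * ε ^ 2 + σ ^ 2) * (inner ℝ a a)) * (1 + 1 / (2 * ε ^ 2 + σ ^ 2))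
      - (1 / (2 * ε ^ 2 + σ ^ 2) * (inner ℝ astar a)) ^ 2)) ^ (-(3:ℝ) / 2) with hY1
  rw [hpow]
  field_simp
  ring
end

section
/- Let d ≥ 1, let σ > 0, let ε ≥ 0, and let a* ∈ ℝ^d with a* ≠ 0. Set c := 2ε² + σ². Define g : ℝ^d → ℝ by g(a) := det((1/σ²)(2aaᵀ + 2ε²I) + I)^{-1/2} + det((1/σ²)(2a*a*ᵀ + 2ε²I) + I)^{-1/2} − 2 det((1/σ²)(aaᵀ + a*a*ᵀ + 2ε²I) + I)^{-1/2}. If a ∈ ℝ^d satisfies ∇g(a) = 0 and a ∉ {0, a*, −a*}, then aᵀa* = 0 and ‖a‖² = c·((‖a*‖² + c)^{1/3} − c^{1/3}) / (2 c^{1/3} − (‖a*‖² + c)^{1/3}). -/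
open Matrix
open scoped RealInnerProductSpace

private lemma mmd_detRank2 {d : ℕ} (r : ℝ) (u v : Fin d → ℝ) :
    ((1 : Matrix (Fin d) (Fin d) ℝ) + r • vecMulVec u u + r • vecMulVec v v).det
      = (1 + r * (u ⬝ᵥ u)) * (1 + r * (v ⬝ᵥ v)) - r ^ 2 * (u ⬝ᵥ v) * (v ⬝ᵥ u) := by
  set U : Matrix (Fin d) (Fin 2) ℝ := Matrix.of (fun i k => if k = 0 then u i else v i) with hU
  set V : Matrix (Fin 2) (Fin d) ℝ := Matrix.of (fun k j => r * (if k = 0 then u j else v j)) with hV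
  have hUV : (1 : Matrix (Fin d) (Fin d) ℝ) + r • vecMulVec u u + r • vecMulVec v v
      = 1 + U * V := by
    ext i j
    simp [hU, hV, Matrix.mul_apply, Fin.sum_univ_two, vecMulVec, Matrix.add_apply]
    ring
  have e00 : ((1 : Matrix (Fin 2) (Fin 2) ℝ) + V * U) 0 0 = 1 + r * (u ⬝ᵥ u) := by
    simp [hU, hV, Matrix.mul_apply, dotProduct, Matrix.one_apply, Finset.mul_sum, mul_assoc]
  have e01 : ((1 : Matrix (Fin 2) (Fin 2) ℝ) + V * U) 0 1 = r * (u ⬝ᵥ v) := by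
    simp [hU, hV, Matrix.mul_apply, dotProduct, Matrix.one_apply, Finset.mul_sum, mul_assoc]
  have e10 : ((1 : Matrix (Fin 2) (Fin 2) ℝ) + V * U) 1 0 = r * (v ⬝ᵥ u) := by
    simp [hU, hV, Matrix.mul_apply, dotProduct, Matrix.one_apply, Finset.mul_sum, mul_assoc]
  have e11 : ((1 : Matrix (Fin 2) (Fin 2) ℝ) + V * U) 1 1 = 1 + r * (v ⬝ᵥ v) := by
    simp [hU, hV, Matrix.mul_apply, dotProduct, Matrix.one_apply, Finset.mul_sum, mul_assoc]
  rw [hUV, Matrix.det_one_add_mul_comm, Matrix.det_fin_two, e00, e01, e10, e11]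
  ring

private lemma mmd_det1 {d : ℕ} {σ ε cc : ℝ} (hσ : σ ≠ 0) (hcpos : 0 < cc)
    (heq : cc = 2 * ε ^ 2 + σ ^ 2) (x : Fin d → ℝ) :
    ((1 / σ ^ 2) • ((2 : ℝ) • vecMulVec x x + (2 * ε ^ 2) • (1 : Matrix (Fin d) (Fin d) ℝ)) + 1).det
      = (cc / σ ^ 2) ^ d * (1 + 2 / cc * (x ⬝ᵥ x)) := by
  have hcc : cc ≠ 0 := ne_of_gt hcpos
  have hM : (1 / σ ^ 2) • ((2 : ℝ) • vecMulVec x x + (2 * ε ^ 2) • (1 : Matrix (Fin d) (Fin d) ℝ)) + 1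
      = (cc / σ ^ 2) • ((1 : Matrix (Fin d) (Fin d) ℝ) + (2 / cc) • vecMulVec x x
          + (2 / cc) • vecMulVec (0 : Fin d → ℝ) (0 : Fin d → ℝ)) := by
    ext i j
    by_cases h : i = j
    · simp [Matrix.add_apply, Matrix.smul_apply, Matrix.one_apply, h, vecMulVec]
      field_simp
      linear_combination (-1:ℝ) * heq
    · simp [Matrix.add_apply, Matrix.smul_apply, Matrix.one_apply, h, vecMulVec]
      field_simp
  rw [hM, Matrix.det_smul, mmd_detRank2]
  simp [Fintype.card_fin]

private lemma mmd_det3 {d : ℕ} {σ ε cc : ℝ} (hσ : σ ≠ 0) (hcpos : 0 < cc)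
    (heq : cc = 2 * ε ^ 2 + σ ^ 2) (x y : Fin d → ℝ) :
    ((1 / σ ^ 2) • (vecMulVec x x + vecMulVec y y + (2 * ε ^ 2) • (1 : Matrix (Fin d) (Fin d) ℝ)) + 1).det
      = (cc / σ ^ 2) ^ d * ((1 + 1 / cc * (x ⬝ᵥ x)) * (1 + 1 / cc * (y ⬝ᵥ y))
          - (1 / cc) ^ 2 * (x ⬝ᵥ y) * (y ⬝ᵥ x)) := by
  have hcc : cc ≠ 0 := ne_of_gt hcpos
  have hM : (1 / σ ^ 2) • (vecMulVec x x + vecMulVec y y + (2 * ε ^ 2) • (1 : Matrix (Fin d) (Fin d) ℝ)) + 1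
      = (cc / σ ^ 2) • ((1 : Matrix (Fin d) (Fin d) ℝ) + (1 / cc) • vecMulVec x x
          + (1 / cc) • vecMulVec y y) := by
    ext i j
    by_cases h : i = j
    · simp [Matrix.add_apply, Matrix.smul_apply, Matrix.one_apply, h, vecMulVec]
      field_simp
      linear_combination (-1:ℝ) * heq
    · simp [Matrix.add_apply, Matrix.smul_apply, Matrix.one_apply, h, vecMulVec]
      field_simp
  rw [hM, Matrix.det_smul, mmd_detRank2]
  simp [Fintype.card_fin]

private lemma mmd_rpow_base_inj {X Y e : ℝ} (hX : 0 < X) (hY : 0 < Y) (he : e ≠ 0)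
    (h : X ^ e = Y ^ e) : X = Y := by
  have h2 := congrArg (fun z : ℝ => z ^ e⁻¹) h
  simpa [← Real.rpow_mul hX.le, ← Real.rpow_mul hY.le, mul_inv_cancel₀ he] using h2

private lemma mmd_final_calc {cc s t : ℝ} (hcc : 0 < cc) (hs : 0 < s) (ht : 0 < t)
    (h : (1 + 2 / cc * s) ^ (-(3:ℝ)/2)
      = (1 + 1 / cc * t) * ((1 + 1 / cc * s) * (1 + 1 / cc * t)) ^ (-(3:ℝ)/2)) :
    0 < 2 * cc ^ ((1:ℝ)/3) - (t + cc) ^ ((1:ℝ)/3) ∧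
      s = cc * ((t + cc) ^ ((1:ℝ)/3) - cc ^ ((1:ℝ)/3)) /
        (2 * cc ^ ((1:ℝ)/3) - (t + cc) ^ ((1:ℝ)/3)) := by
  have hu : (0:ℝ) < 1 + 1 / cc * s := by positivity
  have hz : (1:ℝ) < 1 + 1 / cc * t := by
    have : 0 < 1 / cc * t := by positivity
    linarith
  have hz0 : (0:ℝ) < 1 + 1 / cc * t := lt_trans one_pos hz
  have hw : (0:ℝ) < 1 + 2 / cc * s := by positivity
  set u : ℝ := 1 + 1 / cc * s with hudef
  set z : ℝ := 1 + 1 / cc * t with hzdef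
  have hR : (0:ℝ) < z ^ ((1:ℝ)/3) := Real.rpow_pos_of_pos hz0 _
  have key : (1 + 2 / cc * s) = u * z ^ ((1:ℝ)/3) := by
    have hzz : z * z ^ (-(3:ℝ)/2) = z ^ (-(1:ℝ)/2) := by
      nth_rewrite 1 [← Real.rpow_one z]
      rw [← Real.rpow_add hz0]; norm_num
    have hzz2 : (z ^ ((1:ℝ)/3)) ^ (-(3:ℝ)/2) = z ^ (-(1:ℝ)/2) := by
      rw [← Real.rpow_mul hz0.le]; norm_num
    have hrhs : z * (u * z) ^ (-(3:ℝ)/2) = (u * z ^ ((1:ℝ)/3)) ^ (-(3:ℝ)/2) := by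
      rw [Real.mul_rpow hu.le hz0.le, Real.mul_rpow hu.le hR.le, hzz2,
        mul_left_comm, hzz]
    rw [hrhs] at h
    exact mmd_rpow_base_inj hw (by positivity) (by norm_num) h
  have hcc3 : (0:ℝ) < cc ^ ((1:ℝ)/3) := Real.rpow_pos_of_pos hcc _
  have hzq : z = (t + cc) / cc := by
    rw [hzdef]; field_simp; ring
  have hRv : z ^ ((1:ℝ)/3) = (t + cc) ^ ((1:ℝ)/3) / cc ^ ((1:ℝ)/3) := by
    rw [hzq, Real.div_rpow (by linarith) hcc.le]
  set R : ℝ := z ^ ((1:ℝ)/3) with hRdef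
  have hR1 : 1 < R := by
    rw [hRdef]
    exact Real.one_lt_rpow_iff_of_pos hz0 |>.mpr (Or.inl ⟨hz, by norm_num⟩)
  have keyc : cc + 2 * s = (cc + s) * R := by
    have := key
    have hcu : cc * u = cc + s := by rw [hudef]; field_simp
    field_simp [hudef] at this ⊢
    rw [this, hcu]
    ring
  have h2R : 0 < 2 - R := by
    by_contra hcon
    push_neg at hcon
    nlinarith
  have hsval : s = cc * (R - 1) / (2 - R) := by
    field_simp
    nlinarith [keyc]
  have hden : 2 * cc ^ ((1:ℝ)/3) - (t + cc) ^ ((1:ℝ)/3) = cc ^ ((1:ℝ)/3) * (2 - R) := by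
    rw [hRv]; field_simp
  have hdenpos : 0 < 2 * cc ^ ((1:ℝ)/3) - (t + cc) ^ ((1:ℝ)/3) := by
    rw [hden]; positivity
  have hT : (t + cc) ^ ((1:ℝ)/3) = R * cc ^ ((1:ℝ)/3) := by
    rw [hRv]; field_simp
  refine ⟨hdenpos, ?_⟩
  have hpos2 : (0:ℝ) < 2 * cc ^ ((1:ℝ)/3) - R * cc ^ ((1:ℝ)/3) := by nlinarith
  rw [hsval, hT, div_eq_div_iff h2R.ne' hpos2.ne']
  ring

private lemma mmd_grad_gexp {d : ℕ} (cc Kd t : ℝ) (astar a : EuclideanSpace ℝ (Fin d))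
    (hq1 : (0:ℝ) < 1 + 2 / cc * ⟪a, a⟫)
    (hq2 : (0:ℝ) < (1 + 1 / cc * ⟪a, a⟫) * (1 + 1 / cc * t)
      - (1 / cc) ^ 2 * (⟪a, astar⟫ * ⟪a, astar⟫)) :
    HasGradientAt (fun x : EuclideanSpace ℝ (Fin d) =>
        Kd * (1 + 2 / cc * ⟪x, x⟫) ^ (-(1:ℝ)/2) + Kd * (1 + 2 / cc * t) ^ (-(1:ℝ)/2)
          - (2 * Kd) * ((1 + 1 / cc * ⟪x, x⟫) * (1 + 1 / cc * t)
              - (1 / cc) ^ 2 * (⟪x, astar⟫ * ⟪x, astar⟫)) ^ (-(1:ℝ)/2))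
      (((Kd * ((-(1:ℝ)/2) * (1 + 2 / cc * ⟪a, a⟫) ^ ((-(1:ℝ)/2) - 1)) * (4 / cc))
          - 2 * Kd * ((-(1:ℝ)/2) * ((1 + 1 / cc * ⟪a, a⟫) * (1 + 1 / cc * t)
              - (1 / cc) ^ 2 * (⟪a, astar⟫ * ⟪a, astar⟫)) ^ ((-(1:ℝ)/2) - 1))
            * ((2 / cc) * (1 + 1 / cc * t))) • a
        + (2 * Kd * ((-(1:ℝ)/2) * ((1 + 1 / cc * ⟪a, a⟫) * (1 + 1 / cc * t)
              - (1 / cc) ^ 2 * (⟪a, astar⟫ * ⟪a, astar⟫)) ^ ((-(1:ℝ)/2) - 1))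
            * ((1 / cc) ^ 2 * (2 * ⟪a, astar⟫))) • astar) a := by
  rw [hasGradientAt_iff_hasFDerivAt]
  have hid := hasFDerivAt_id (𝕜 := ℝ) a
  have hss := hid.inner ℝ hid
  have hsp := hid.inner ℝ (hasFDerivAt_const astar a)
  have hq1' := ((hss.const_mul (2 / cc)).const_add 1)
  have hφ1 := (Real.hasDerivAt_rpow_const (p := -(1:ℝ)/2)
      (Or.inl (ne_of_gt hq1))).comp_hasFDerivAt a hq1'
  have hT1 := hφ1.const_mul Kd
  have hq2' := (((hss.const_mul (1 / cc)).const_add 1).mul_const (1 + 1 / cc * t)).sub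
      ((hsp.mul hsp).const_mul ((1 / cc) ^ 2))
  have hφ2 :=
    (Real.hasDerivAt_rpow_const (p := -(1:ℝ)/2)
      (Or.inl (ne_of_gt hq2))).comp_hasFDerivAt a hq2'
  have hT3 := hφ2.const_mul (2 * Kd)
  have hT2 := hasFDerivAt_const (𝕜 := ℝ) (Kd * (1 + 2 / cc * t) ^ (-(1:ℝ)/2)) a
  have htot := (hT1.add hT2).sub hT3
  refine htot.congr_fderiv ?_
  ext v
  simp only [ContinuousLinearMap.add_apply, ContinuousLinearMap.sub_apply,
    ContinuousLinearMap.smul_apply, ContinuousLinearMap.coe_comp', Function.comp_apply,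
    ContinuousLinearMap.prod_apply, ContinuousLinearMap.coe_id', id_eq,
    ContinuousLinearMap.zero_apply, fderivInnerCLM_apply, InnerProductSpace.toDual_apply_apply,
    inner_add_left, inner_smul_left, smul_eq_mul, inner_zero_right, conj_trivial,
    add_zero]
  rw [real_inner_comm v a, real_inner_comm v astar]
  ring

theorem mmd_covariance_other_critical_points (d : ℕ) (hd : 1 ≤ d) (σ : ℝ) (hσ : 0 < σ)
    (ε : ℝ) (hε : 0 ≤ ε) (astar : EuclideanSpace ℝ (Fin d)) (hastar : astar ≠ 0)
    (c : ℝ) (hc : c = 2 * ε ^ 2 + σ ^ 2)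
    (g : EuclideanSpace ℝ (Fin d) → ℝ)
    (hg : g = fun a : EuclideanSpace ℝ (Fin d) =>
      (((1 / σ ^ 2) • ((2 : ℝ) • vecMulVec a a + (2 * ε ^ 2) • 1) + 1).det) ^ (-(1 : ℝ) / 2)
      + (((1 / σ ^ 2) • ((2 : ℝ) • vecMulVec astar astar + (2 * ε ^ 2) • 1) + 1).det) ^ (-(1 : ℝ) / 2)
      - 2 * (((1 / σ ^ 2) • (vecMulVec a a + vecMulVec astar astar + (2 * ε ^ 2) • 1) + 1).det) ^ (-(1 : ℝ) / 2))
    (a : EuclideanSpace ℝ (Fin d)) (hcrit : gradient g a = 0)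
    (ha0 : a ≠ 0) (ha1 : a ≠ astar) (ha2 : a ≠ -astar) :
    a ⬝ᵥ astar = 0 ∧
      0 < 2 * c ^ ((1 : ℝ) / 3) - (‖astar‖ ^ 2 + c) ^ ((1 : ℝ) / 3) ∧
      ‖a‖ ^ 2 = c * ((‖astar‖ ^ 2 + c) ^ ((1 : ℝ) / 3) - c ^ ((1 : ℝ) / 3)) /
        (2 * c ^ ((1 : ℝ) / 3) - (‖astar‖ ^ 2 + c) ^ ((1 : ℝ) / 3)) := by
  have hσne : σ ≠ 0 := ne_of_gt hσ
  have hcpos : 0 < c := by rw [hc]; positivity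
  have hdot : ∀ x y : EuclideanSpace ℝ (Fin d), x ⬝ᵥ y = ⟪x, y⟫ := by
    intro x y
    simp [dotProduct, PiLp.inner_apply]
    exact Finset.sum_congr rfl (fun i _ => mul_comm _ _)
  have hs : (0:ℝ) < ⟪a, a⟫ := by
    rw [real_inner_self_eq_norm_sq]
    exact pow_pos (norm_pos_iff.mpr ha0) 2
  have ht : (0:ℝ) < ⟪astar, astar⟫ := by
    rw [real_inner_self_eq_norm_sq]
    exact pow_pos (norm_pos_iff.mpr hastar) 2
  have hq1all : ∀ x : EuclideanSpace ℝ (Fin d), (0:ℝ) < 1 + 2 / c * ⟪x, x⟫ := by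
    intro x
    have := real_inner_self_nonneg (x := x)
    positivity
  have hq2all : ∀ x : EuclideanSpace ℝ (Fin d),
      (0:ℝ) < (1 + 1 / c * ⟪x, x⟫) * (1 + 1 / c * ⟪astar, astar⟫)
        - (1 / c) ^ 2 * (⟪x, astar⟫ * ⟪x, astar⟫) := by
    intro x
    have hcs := real_inner_mul_inner_self_le x astar
    have hx := real_inner_self_nonneg (x := x)
    have h1 : (0:ℝ) < 1 / c := by positivity
    nlinarith [mul_le_mul_of_nonneg_left hcs (sq_nonneg (1 / c)),
      mul_nonneg (mul_nonneg h1.le hx) (mul_nonneg h1.le ht.le),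
      mul_nonneg h1.le hx, mul_nonneg h1.le ht.le]
  set Kd : ℝ := ((c / σ ^ 2) ^ d) ^ (-(1:ℝ)/2) with hKddef
  have hKd : 0 < Kd := by
    rw [hKddef]
    exact Real.rpow_pos_of_pos (pow_pos (by positivity) d) _
  -- rewrite g in explicit form
  have hgexp : g = fun x : EuclideanSpace ℝ (Fin d) =>
      Kd * (1 + 2 / c * ⟪x, x⟫) ^ (-(1:ℝ)/2) + Kd * (1 + 2 / c * ⟪astar, astar⟫) ^ (-(1:ℝ)/2)
        - (2 * Kd) * ((1 + 1 / c * ⟪x, x⟫) * (1 + 1 / c * ⟪astar, astar⟫)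
            - (1 / c) ^ 2 * (⟪x, astar⟫ * ⟪x, astar⟫)) ^ (-(1:ℝ)/2) := by
    rw [hg]
    funext x
    have hq2x := hq2all x
    rw [mmd_det1 hσne hcpos hc x, mmd_det1 hσne hcpos hc astar, mmd_det3 hσne hcpos hc x astar]
    have hb3 : (1 + 1 / c * ((x : Fin d → ℝ) ⬝ᵥ x)) * (1 + 1 / c * ((astar : Fin d → ℝ) ⬝ᵥ astar))
        - (1 / c) ^ 2 * ((x : Fin d → ℝ) ⬝ᵥ astar) * ((astar : Fin d → ℝ) ⬝ᵥ x)
        = (1 + 1 / c * ⟪x, x⟫) * (1 + 1 / c * ⟪astar, astar⟫)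
            - (1 / c) ^ 2 * (⟪x, astar⟫ * ⟪x, astar⟫) := by
      rw [hdot x x, hdot astar astar, hdot x astar, hdot astar x, real_inner_comm astar x]
      ring
    rw [hb3, hdot x x, hdot astar astar]
    rw [Real.mul_rpow (by positivity) (hq1all x).le,
      Real.mul_rpow (by positivity) (hq1all astar).le,
      Real.mul_rpow (by positivity) hq2x.le]
    rw [← hKddef]
    ring
  rw [hgexp] at hcrit
  have hgrad := mmd_grad_gexp c Kd ⟪astar, astar⟫ astar a (hq1all a) (hq2all a)
  rw [hgrad.gradient] at hcrit
  -- abbreviations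
  set A1 : ℝ := (1 + 2 / c * ⟪a, a⟫) ^ ((-(1:ℝ)/2) - 1) with hA1def
  set A2 : ℝ := ((1 + 1 / c * ⟪a, a⟫) * (1 + 1 / c * ⟪astar, astar⟫)
      - (1 / c) ^ 2 * (⟪a, astar⟫ * ⟪a, astar⟫)) ^ ((-(1:ℝ)/2) - 1) with hA2def
  set sv : ℝ := ⟪a, a⟫ with hsvdef
  set tv : ℝ := ⟪astar, astar⟫ with htvdef
  set pv : ℝ := ⟪a, astar⟫ with hpvdef
  set αv : ℝ := Kd * ((-(1:ℝ)/2) * A1) * (4 / c)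
      - 2 * Kd * ((-(1:ℝ)/2) * A2) * ((2 / c) * (1 + 1 / c * tv)) with hαdef
  set βv : ℝ := 2 * Kd * ((-(1:ℝ)/2) * A2) * ((1 / c) ^ 2 * (2 * pv)) with hβdef
  have h0 : αv • a + βv • astar = 0 := hcrit
  have hA1pos : 0 < A1 := by rw [hA1def]; exact Real.rpow_pos_of_pos (hq1all a) _
  have hA2pos : 0 < A2 := by rw [hA2def]; exact Real.rpow_pos_of_pos (hq2all a) _
  have hfactor : (2 * Kd / c) ≠ 0 := by positivity
  have hexp : ((-(1:ℝ)/2) - 1) = (-(3:ℝ)/2) := by norm_num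
  by_cases hp : pv = 0
  · -- orthogonal case
    have hb0 : βv = 0 := by rw [hβdef, hp]; ring
    rw [hb0, zero_smul, add_zero] at h0
    have hα0 : αv = 0 := by
      rcases smul_eq_zero.mp h0 with h | h
      · exact h
      · exact absurd h ha0
    rw [hαdef] at hα0
    have hA : (2 * Kd / c) * A1 = (2 * Kd / c) * ((1 + 1 / c * tv) * A2) := by
      linear_combination (-1:ℝ) * hα0
    have hA' : A1 = (1 + 1 / c * tv) * A2 := mul_left_cancel₀ hfactor hA
    rw [hA1def, hA2def, hp, hexp] at hA'
    have hbase : (1 + 1 / c * sv) * (1 + 1 / c * tv) - (1 / c) ^ 2 * ((0:ℝ) * 0)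
        = (1 + 1 / c * sv) * (1 + 1 / c * tv) := by ring
    rw [hbase] at hA'
    obtain ⟨P1, P2⟩ := mmd_final_calc hcpos hs ht hA'
    refine ⟨?_, ?_, ?_⟩
    · rw [hdot a astar, ← hpvdef]; exact hp
    · rw [← real_inner_self_eq_norm_sq astar, ← htvdef]; exact P1
    · rw [← real_inner_self_eq_norm_sq astar, ← real_inner_self_eq_norm_sq a,
        ← htvdef, ← hsvdef]
      exact P2
  · -- parallel case: contradiction
    exfalso
    have hβne : βv ≠ 0 := by
      intro h0'
      apply hp
      rw [hβdef] at h0'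
      have h2 : (Kd * A2 * (1 / c) ^ 2 * 2) * pv = 0 := by linear_combination (-1:ℝ) * h0'
      exact (mul_eq_zero.mp h2).resolve_left (by positivity)
    have h1 : βv • astar = -(αv • a) := by
      rw [add_comm] at h0
      exact eq_neg_of_add_eq_zero_left h0
    obtain ⟨μ, hast⟩ : ∃ μ : ℝ, astar = μ • a := by
      refine ⟨-(βv⁻¹ * αv), ?_⟩
      calc astar = βv⁻¹ • (βv • astar) := by
            rw [smul_smul, inv_mul_cancel₀ hβne, one_smul]
        _ = βv⁻¹ • (-(αv • a)) := by rw [h1]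
        _ = (-(βv⁻¹ * αv)) • a := by rw [smul_neg, smul_smul, neg_smul]
    have hpμ : pv = μ * sv := by
      rw [hpvdef, hsvdef, hast, real_inner_smul_right]
    have htμ : tv = μ * μ * sv := by
      rw [htvdef, hsvdef, hast, real_inner_smul_right, real_inner_smul_left]
      ring
    rw [hast, smul_smul, ← add_smul] at h0
    have heqμ : αv + βv * μ = 0 := by
      rcases smul_eq_zero.mp h0 with h | h
      · exact h
      · exact absurd h ha0
    have hA12 : (2 * Kd / c) * A1 = (2 * Kd / c) * A2 := by
      linear_combination (-1:ℝ) * heqμ + hαdef + μ * hβdef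
        + (2 * Kd / c ^ 2 * A2) * htμ + (-(2 * Kd / c ^ 2 * A2 * μ)) * hpμ
    have hA1A2 : A1 = A2 := mul_left_cancel₀ hfactor hA12
    have hbe : 1 + 2 / c * sv
        = (1 + 1 / c * sv) * (1 + 1 / c * tv) - (1 / c) ^ 2 * (pv * pv) := by
      refine mmd_rpow_base_inj (hq1all a) (hq2all a) (e := (-(1:ℝ)/2) - 1) (by norm_num) ?_
      rw [← hA1def, ← hA2def]
      exact hA1A2
    have h2 : (sv / c) * (μ * μ) = (sv / c) * 1 := by
      linear_combination (-1:ℝ) * hbe + (-(1/c) - sv/c^2) * htμ + ((pv + μ * sv)/c^2) * hpμ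
    have hμ2 : μ * μ = 1 := mul_left_cancel₀ (by positivity) h2
    rcases mul_self_eq_one_iff.mp hμ2 with h | h
    · exact ha1 ((by rw [hast, h, one_smul] : astar = a).symm)
    · apply ha2
      have : astar = -a := by rw [hast, h, neg_one_smul]
      rw [this, neg_neg]
end

section
/- Let d ≥ 2, let σ > 0, let ε ≥ 0, and let a* ∈ ℝ^d with ‖a*‖ = 1. Set c := 2ε² + σ² and assume 2c^{1/3} > (1 + c)^{1/3}. Define g : ℝ^d → ℝ by g(a) := det((1/σ²)(2aaᵀ + 2ε²I) + I)^{-1/2} + det((1/σ²)(2a*a*ᵀ + 2ε²I) + I)^{-1/2} − 2 det((1/σ²)(aaᵀ + a*a*ᵀ + 2ε²I) + I)^{-1/2}. If a ∈ ℝ^d satisfies aᵀa* = 0 and ‖a‖² = c·((1 + c)^{1/3} − c^{1/3}) / (2 c^{1/3} − (1 + c)^{1/3}), then the second derivative at t = 0 of the map t ↦ g(a + t·a*) is strictly negative; in particular such a critical point is a strict saddle of g and not a local minimum. -/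
open Matrix

private theorem det_two_rank_update (d : ℕ) (hd : 2 ≤ d) (u v : Fin d → ℝ) (γ δ β : ℝ) (hβ : β ≠ 0) :
    (γ • vecMulVec u u + δ • vecMulVec v v + β • (1 : Matrix (Fin d) (Fin d) ℝ)).det
      = β ^ (d - 2) * ((β + γ * (u ⬝ᵥ u)) * (β + δ * (v ⬝ᵥ v)) - γ * δ * (u ⬝ᵥ v) ^ 2) := by
  set W : Matrix (Fin d) (Fin 2) ℝ := Matrix.of fun i k => if k = 0 then u i else v i with hW
  set M : Matrix (Fin 2) (Fin d) ℝ := Matrix.of fun k j => if k = 0 then γ * u j else δ * v j with hM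
  have hWM : W * M = γ • vecMulVec u u + δ • vecMulVec v v := by
    ext i j
    simp [Matrix.mul_apply, hW, hM, Matrix.vecMulVec_apply, Fin.sum_univ_two]
    ring
  have key : (γ • vecMulVec u u + δ • vecMulVec v v + β • (1 : Matrix (Fin d) (Fin d) ℝ))
      = β • ((1 : Matrix (Fin d) (Fin d) ℝ) + W * (β⁻¹ • M)) := by
    rw [Matrix.mul_smul, ← hWM]
    rw [smul_add, smul_smul, mul_inv_cancel₀ hβ, one_smul, add_comm]
  rw [key, Matrix.det_smul, Matrix.det_one_add_mul_comm]
  have e00 : ((β⁻¹ • M) * W) 0 0 = β⁻¹ * (γ * (u ⬝ᵥ u)) := by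
    simp [Matrix.mul_apply, hM, hW, dotProduct, Finset.mul_sum, mul_assoc]
  have e01 : ((β⁻¹ • M) * W) 0 1 = β⁻¹ * (γ * (u ⬝ᵥ v)) := by
    simp [Matrix.mul_apply, hM, hW, dotProduct, Finset.mul_sum, mul_assoc]
  have e10 : ((β⁻¹ • M) * W) 1 0 = β⁻¹ * (δ * (v ⬝ᵥ u)) := by
    simp [Matrix.mul_apply, hM, hW, dotProduct, Finset.mul_sum, mul_assoc]
  have e11 : ((β⁻¹ • M) * W) 1 1 = β⁻¹ * (δ * (v ⬝ᵥ v)) := by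
    simp [Matrix.mul_apply, hM, hW, dotProduct, Finset.mul_sum, mul_assoc]
  have hdet2 : ((1 : Matrix (Fin 2) (Fin 2) ℝ) + (β⁻¹ • M) * W).det
      = (1 + β⁻¹ * (γ * (u ⬝ᵥ u))) * (1 + β⁻¹ * (δ * (v ⬝ᵥ v)))
        - (β⁻¹ * (γ * (u ⬝ᵥ v))) * (β⁻¹ * (δ * (v ⬝ᵥ u))) := by
    rw [Matrix.det_fin_two]
    simp only [Matrix.add_apply, Matrix.one_apply_eq, Matrix.one_apply_ne (by decide : (0:Fin 2) ≠ 1),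
      Matrix.one_apply_ne (by decide : (1:Fin 2) ≠ 0), e00, e01, e10, e11]
    ring
  rw [hdet2]
  have hcard : Fintype.card (Fin d) = d := by simp
  rw [hcard]
  have hvu : v ⬝ᵥ u = u ⬝ᵥ v := dotProduct_comm v u
  rw [hvu]
  have hpow : β ^ d = β ^ (d - 2) * β ^ 2 := by
    rw [← pow_add, Nat.sub_add_cancel hd]
  rw [hpow]
  field_simp

/-- key rpow inequality -/
private theorem key_rpow_lt (β X Y : ℝ) (hβ : 0 < β) (hX : 0 < X) (hXY : β * X < Y) :
    β * Y ^ (-(3:ℝ)/2) < β ^ (-(1:ℝ)/2) * X ^ (-(3:ℝ)/2) := by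
  have hY : 0 < Y := lt_trans (by positivity) hXY
  have hcore : (β * X) ^ ((3:ℝ)/2) < Y ^ ((3:ℝ)/2) :=
    Real.rpow_lt_rpow (by positivity) hXY (by norm_num)
  have hsplit : (β * X) ^ ((3:ℝ)/2) = β ^ ((3:ℝ)/2) * X ^ ((3:ℝ)/2) :=
    Real.mul_rpow hβ.le hX.le
  have hβ32 : β ^ ((3:ℝ)/2) = β * β ^ ((1:ℝ)/2) := by
    rw [show ((3:ℝ)/2) = 1 + 1/2 by norm_num, Real.rpow_add hβ, Real.rpow_one]
  have hu : 0 < β ^ ((1:ℝ)/2) := Real.rpow_pos_of_pos hβ _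
  have hp : 0 < X ^ ((3:ℝ)/2) := Real.rpow_pos_of_pos hX _
  have hq : 0 < Y ^ ((3:ℝ)/2) := Real.rpow_pos_of_pos hY _
  have hYr : Y ^ (-(3:ℝ)/2) = (Y ^ ((3:ℝ)/2))⁻¹ := by
    rw [show (-(3:ℝ)/2) = -((3:ℝ)/2) by norm_num, Real.rpow_neg hY.le]
  have hXr : X ^ (-(3:ℝ)/2) = (X ^ ((3:ℝ)/2))⁻¹ := by
    rw [show (-(3:ℝ)/2) = -((3:ℝ)/2) by norm_num, Real.rpow_neg hX.le]
  have hβr : β ^ (-(1:ℝ)/2) = (β ^ ((1:ℝ)/2))⁻¹ := by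
    rw [show (-(1:ℝ)/2) = -((1:ℝ)/2) by norm_num, Real.rpow_neg hβ.le]
  rw [hYr, hXr, hβr, ← div_eq_mul_inv, ← mul_inv, ← one_div,
    div_lt_div_iff₀ hq (by positivity)]
  nlinarith [hcore, hsplit, hβ32]

private theorem hasDerivAt_piece (X k p q : ℝ) (hX : 0 < X) (hk : 0 < k) (hq : q = p - 1) (t : ℝ) :
    HasDerivAt (fun t : ℝ => (X + k * t ^ 2) ^ p) (2 * k * t * p * (X + k * t ^ 2) ^ q) t := by
  have hpos : 0 < X + k * t ^ 2 := by nlinarith [sq_nonneg t]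
  have hu : HasDerivAt (fun s : ℝ => X + k * s ^ 2) (k * (2 * t)) t := by
    simpa using HasDerivAt.const_add X (HasDerivAt.const_mul k (hasDerivAt_pow 2 t))
  have h := hu.rpow_const (p := p) (Or.inl hpos.ne')
  rw [hq]
  convert h using 1
  ring

private theorem hasDerivAt_piece' (X k p q : ℝ) (s : ℝ) (hpos : 0 < X + k * s) (hq : q = p - 1) :
    HasDerivAt (fun s : ℝ => (X + k * s) ^ p) (k * p * (X + k * s) ^ q) s := by
  have hu : HasDerivAt (fun u : ℝ => X + k * u) k s := by
    simpa using HasDerivAt.const_add X (HasDerivAt.const_mul k (hasDerivAt_id' (x := s)))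
  have h := hu.rpow_const (p := p) (Or.inl hpos.ne')
  rw [hq]
  exact h

set_option maxHeartbeats 2000000 in
theorem mmd_covariance_strict_saddle (d : ℕ) (hd : 2 ≤ d) (σ : ℝ) (hσ : 0 < σ)
    (ε : ℝ) (hε : 0 ≤ ε) (astar : EuclideanSpace ℝ (Fin d)) (hastar : ‖astar‖ = 1)
    (c : ℝ) (hc : c = 2 * ε ^ 2 + σ ^ 2)
    (hden : (1 + c) ^ ((1 : ℝ) / 3) < 2 * c ^ ((1 : ℝ) / 3))
    (g : EuclideanSpace ℝ (Fin d) → ℝ)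
    (hg : g = fun a : EuclideanSpace ℝ (Fin d) =>
      (((1 / σ ^ 2) • ((2 : ℝ) • vecMulVec a a + (2 * ε ^ 2) • 1) + 1).det) ^ (-(1 : ℝ) / 2)
      + (((1 / σ ^ 2) • ((2 : ℝ) • vecMulVec astar astar + (2 * ε ^ 2) • 1) + 1).det) ^ (-(1 : ℝ) / 2)
      - 2 * (((1 / σ ^ 2) • (vecMulVec a a + vecMulVec astar astar + (2 * ε ^ 2) • 1) + 1).det) ^ (-(1 : ℝ) / 2))
    (a : EuclideanSpace ℝ (Fin d)) (horth : a ⬝ᵥ astar = 0)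
    (hnorm : ‖a‖ ^ 2 = c * ((1 + c) ^ ((1 : ℝ) / 3) - c ^ ((1 : ℝ) / 3)) /
      (2 * c ^ ((1 : ℝ) / 3) - (1 + c) ^ ((1 : ℝ) / 3))) :
    deriv (deriv (fun t : ℝ => g (a + t • astar))) 0 < 0 ∧ ¬ IsLocalMin g a := by
  have hσ2 : (0:ℝ) < σ ^ 2 := by positivity
  have hcpos : 0 < c := by rw [hc]; positivity
  set β : ℝ := c / σ ^ 2 with hβdef
  clear_value β
  have hβpos : 0 < β := by rw [hβdef]; positivity
  have hβne : β ≠ 0 := ne_of_gt hβpos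
  set r2 : ℝ := ‖a‖ ^ 2 with hr2def
  clear_value r2
  have hr2nn : 0 ≤ r2 := by rw [hr2def]; positivity
  -- dot product facts
  have hdP : ∀ x y : EuclideanSpace ℝ (Fin d), x ⬝ᵥ y = (inner ℝ x y : ℝ) := by
    intro x y; rw [EuclideanSpace.inner_eq_star_dotProduct, star_trivial, dotProduct_comm]
  have haa : a ⬝ᵥ a = r2 := by rw [hdP, real_inner_self_eq_norm_sq]; exact hr2def.symm
  have hss : astar ⬝ᵥ astar = 1 := by
    rw [hdP, real_inner_self_eq_norm_sq, hastar]; norm_num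
  have hbb : ∀ t : ℝ, WithLp.ofLp (a + t • astar) ⬝ᵥ WithLp.ofLp (a + t • astar) = r2 + t ^ 2 := by
    intro t
    rw [hdP, real_inner_add_add_self, real_inner_smul_right, real_inner_smul_left,
      real_inner_smul_right]
    simp only [← hdP, horth, haa, hss]
    ring
  have hbs : ∀ t : ℝ, (a + t • astar) ⬝ᵥ astar = t := by
    intro t
    rw [hdP, inner_add_left, real_inner_smul_left]
    simp only [← hdP, horth, hss]
    ring
  -- cube-root quantities and the fundamental inequality
  set x : ℝ := c ^ ((1:ℝ)/3) with hxdef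
  set y : ℝ := (1 + c) ^ ((1:ℝ)/3) with hydef
  clear_value x y
  have hx : 0 < x := by rw [hxdef]; exact Real.rpow_pos_of_pos hcpos _
  have hy : 0 < y := by rw [hydef]; exact Real.rpow_pos_of_pos (by linarith) _
  have hxy : x < y := by rw [hxdef, hydef]; exact Real.rpow_lt_rpow hcpos.le (by linarith) (by norm_num)
  have h2xy : y < 2 * x := hden
  have hD : 0 < 2 * x - y := by linarith
  have hx3 : x ^ 3 = c := by
    rw [hxdef, ← Real.rpow_natCast (c ^ ((1:ℝ)/3)) 3, ← Real.rpow_mul hcpos.le]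
    norm_num
  have hy3 : y ^ 3 = 1 + c := by
    rw [hydef, ← Real.rpow_natCast ((1 + c) ^ ((1:ℝ)/3)) 3,
      ← Real.rpow_mul (by linarith : (0:ℝ) ≤ 1 + c)]
    norm_num
  have hr2eq : r2 * (2 * x - y) = c * (y - x) := by
    rw [hnorm, div_mul_cancel₀ _ hD.ne']
  have FI : 0 < c + r2 - c * r2 := by
    have h2 : (c + r2 - c * r2) * (2 * x - y) = x ^ 4 * y * (y - x) * (y + x) := by
      linear_combination (1 - c) * hr2eq - x ^ 4 * hy3 - (c * (x - y) + x - x ^ 3 * y) * hx3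
    have hprod : 0 < x ^ 4 * y * (y - x) * (y + x) :=
      mul_pos (mul_pos (mul_pos (pow_pos hx 4) hy) (by linarith)) (by linarith)
    have hpos : 0 < (c + r2 - c * r2) * (2 * x - y) := h2 ▸ hprod
    rcases mul_pos_iff.mp hpos with ⟨h, _⟩ | ⟨_, h⟩
    · exact h
    · linarith
  -- scalar quantities for the path
  set k1 : ℝ := 2 / σ ^ 2 with hk1def
  set k3 : ℝ := β / σ ^ 2 with hk3def
  set P0 : ℝ := β + k1 * r2 with hP0def
  set Q0 : ℝ := (β + 1 / σ ^ 2 * r2) * (β + 1 / σ ^ 2 * 1) with hQ0def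
  clear_value k1 k3 P0 Q0
  have hk1pos : 0 < k1 := by rw [hk1def]; positivity
  have hk3pos : 0 < k3 := by rw [hk3def]; positivity
  have hinvσ : (0:ℝ) < 1 / σ ^ 2 := by positivity
  have hP0pos : 0 < P0 := by
    rw [hP0def]; linarith [mul_nonneg hk1pos.le hr2nn]
  have hQ0pos : 0 < Q0 := by
    rw [hQ0def]
    have h1 : 0 < β + 1 / σ ^ 2 * r2 := by linarith [mul_nonneg hinvσ.le hr2nn]
    have h2 : 0 < β + 1 / σ ^ 2 * 1 := by linarith [hinvσ]
    exact mul_pos h1 h2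
  have hQP : β * P0 < Q0 := by
    have e : (Q0 - β * P0) * (σ ^ 2 * σ ^ 2) = c + r2 - c * r2 := by
      rw [hQ0def, hP0def, hk1def, hβdef]
      field_simp
      ring
    have hpos : 0 < (Q0 - β * P0) * (σ ^ 2 * σ ^ 2) := by rw [e]; exact FI
    rcases mul_pos_iff.mp hpos with ⟨h, _⟩ | ⟨_, h⟩
    · linarith
    · exact absurd h (not_lt.mpr (mul_pos hσ2 hσ2).le)
  have hPt : ∀ t : ℝ, 0 < P0 + k1 * t ^ 2 := by
    intro t; linarith [mul_nonneg hk1pos.le (sq_nonneg t)]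
  have hQt : ∀ t : ℝ, 0 < Q0 + k3 * t ^ 2 := by
    intro t; linarith [mul_nonneg hk3pos.le (sq_nonneg t)]
  set C3 : ℝ := ((β ^ (d - 2) : ℝ)) ^ (-(1:ℝ)/2) with hC3def
  have hC3pos : 0 < C3 := by rw [hC3def]; exact Real.rpow_pos_of_pos (pow_pos hβpos _) _
  set C1 : ℝ := C3 * β ^ (-(1:ℝ)/2) with hC1def
  clear_value C3 C1
  have hC1pos : 0 < C1 := by
    rw [hC1def]; exact mul_pos hC3pos (Real.rpow_pos_of_pos hβpos _)
  set K2 : ℝ := (((1 / σ ^ 2) • ((2 : ℝ) • vecMulVec astar astar + (2 * ε ^ 2) • 1) + 1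
      : Matrix (Fin d) (Fin d) ℝ).det) ^ (-(1 : ℝ) / 2) with hK2def
  clear_value K2
  -- matrix rearrangements
  have hscal : 1 / σ ^ 2 * (2 * ε ^ 2) + 1 = β := by
    rw [hβdef, hc]; field_simp
  have hre1 : ∀ M N : Matrix (Fin d) (Fin d) ℝ,
      (1 / σ ^ 2) • ((2 : ℝ) • M + (2 * ε ^ 2) • 1) + 1
        = (2 / σ ^ 2) • M + (0:ℝ) • N + β • 1 := by
    intro M N
    ext i j
    simp only [Matrix.add_apply, Matrix.smul_apply, Matrix.one_apply, smul_eq_mul]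
    by_cases h : i = j <;> simp only [h, if_true, if_false] <;>
      [skip; skip] <;> first
      | (rw [← hscal]; ring)
      | ring
  have hre3 : ∀ M N : Matrix (Fin d) (Fin d) ℝ,
      (1 / σ ^ 2) • (M + N + (2 * ε ^ 2) • 1) + 1
        = (1 / σ ^ 2) • M + (1 / σ ^ 2) • N + β • 1 := by
    intro M N
    ext i j
    simp only [Matrix.add_apply, Matrix.smul_apply, Matrix.one_apply, smul_eq_mul]
    by_cases h : i = j <;> simp only [h, if_true, if_false] <;> first
      | (rw [← hscal]; ring)
      | ring
  -- determinants along the path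
  have hdet1 : ∀ t : ℝ,
      ((1 / σ ^ 2) • ((2 : ℝ) • vecMulVec (a + t • astar) (a + t • astar) + (2 * ε ^ 2) • 1)
          + 1 : Matrix (Fin d) (Fin d) ℝ).det
        = β ^ (d - 2) * (β * (P0 + k1 * t ^ 2)) := by
    intro t
    rw [hre1 _ (vecMulVec astar astar),
      det_two_rank_update d hd _ _ _ _ _ hβne, hbb t]
    rw [hP0def, hk1def]
    ring
  have hdet3 : ∀ t : ℝ,
      ((1 / σ ^ 2) • (vecMulVec (a + t • astar) (a + t • astar) + vecMulVec astar astar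
          + (2 * ε ^ 2) • 1) + 1 : Matrix (Fin d) (Fin d) ℝ).det
        = β ^ (d - 2) * (Q0 + k3 * t ^ 2) := by
    intro t
    rw [hre3 _ (vecMulVec astar astar),
      det_two_rank_update d hd _ _ _ _ _ hβne, hbb t, hbs t, hss]
    rw [hQ0def, hk3def]
    ring
  -- rpow splitting
  have hβd : (0:ℝ) < β ^ (d - 2) := pow_pos hβpos _
  have hs1 : ∀ X : ℝ, 0 < X → (β ^ (d - 2) * (β * X)) ^ (-(1:ℝ)/2) = C1 * X ^ (-(1:ℝ)/2) := by
    intro X hX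
    rw [Real.mul_rpow hβd.le (by positivity), Real.mul_rpow hβpos.le hX.le, hC1def, hC3def]
    ring
  have hs3 : ∀ X : ℝ, 0 < X → (β ^ (d - 2) * X) ^ (-(1:ℝ)/2) = C3 * X ^ (-(1:ℝ)/2) := by
    intro X hX
    rw [Real.mul_rpow hβd.le hX.le, hC3def]
  -- the explicit path function
  have hfun : (fun t : ℝ => g (a + t • astar))
      = fun t : ℝ => C1 * (P0 + k1 * t ^ 2) ^ (-(1:ℝ)/2) + K2
          - 2 * (C3 * (Q0 + k3 * t ^ 2) ^ (-(1:ℝ)/2)) := by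
    funext t
    simp only [hg]
    rw [hdet1 t, hdet3 t, hs1 _ (hPt t), hs3 _ (hQt t)]
  -- derivative machinery
  have hq32 : (-(3:ℝ)/2) = (-(1:ℝ)/2) - 1 := by norm_num
  set G : ℝ → ℝ := fun t => C1 * k1 * (-(1:ℝ)) * (P0 + k1 * t ^ 2) ^ (-(3:ℝ)/2)
      + 2 * (C3 * k3 * (Q0 + k3 * t ^ 2) ^ (-(3:ℝ)/2)) with hGdef
  have hFd : ∀ t : ℝ, HasDerivAt (fun t : ℝ => C1 * (P0 + k1 * t ^ 2) ^ (-(1:ℝ)/2) + K2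
      - 2 * (C3 * (Q0 + k3 * t ^ 2) ^ (-(1:ℝ)/2))) (t * G t) t := by
    intro t
    have h1 := hasDerivAt_piece P0 k1 (-(1:ℝ)/2) (-(3:ℝ)/2) hP0pos hk1pos hq32 t
    have h3 := hasDerivAt_piece Q0 k3 (-(1:ℝ)/2) (-(3:ℝ)/2) hQ0pos hk3pos hq32 t
    have h := ((HasDerivAt.const_mul C1 h1).add_const K2).sub
      (HasDerivAt.const_mul 2 (HasDerivAt.const_mul C3 h3))
    refine h.congr_deriv ?_
    rw [hGdef]
    ring
  have hderiv1 : deriv (fun t : ℝ => C1 * (P0 + k1 * t ^ 2) ^ (-(1:ℝ)/2) + K2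
      - 2 * (C3 * (Q0 + k3 * t ^ 2) ^ (-(1:ℝ)/2))) = fun t => t * G t :=
    funext fun t => (hFd t).deriv
  have hGd : HasDerivAt G (C1 * k1 * (-(1:ℝ)) * (2 * k1 * 0 * (-(3:ℝ)/2) * (P0 + k1 * 0 ^ 2) ^ (-(5:ℝ)/2))
      + 2 * (C3 * k3 * (2 * k3 * 0 * (-(3:ℝ)/2) * (Q0 + k3 * 0 ^ 2) ^ (-(5:ℝ)/2)))) 0 := by
    have h1 := hasDerivAt_piece P0 k1 (-(3:ℝ)/2) (-(5:ℝ)/2) hP0pos hk1pos (by norm_num) 0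
    have h3 := hasDerivAt_piece Q0 k3 (-(3:ℝ)/2) (-(5:ℝ)/2) hQ0pos hk3pos (by norm_num) 0
    exact (HasDerivAt.const_mul (C1 * k1 * (-(1:ℝ))) h1).add
      (HasDerivAt.const_mul 2 (HasDerivAt.const_mul (C3 * k3) h3))
  have h2nd : HasDerivAt (fun t : ℝ => t * G t) (G 0) 0 := by
    have := HasDerivAt.mul (hasDerivAt_id' (x := (0:ℝ))) hGd
    exact this.congr_deriv (by simp)
  have hG0 : G 0 = 2 * C3 / σ ^ 2 * (β * Q0 ^ (-(3:ℝ)/2) - β ^ (-(1:ℝ)/2) * P0 ^ (-(3:ℝ)/2)) := by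
    show C1 * k1 * (-(1:ℝ)) * (P0 + k1 * (0:ℝ) ^ 2) ^ (-(3:ℝ)/2)
        + 2 * (C3 * k3 * (Q0 + k3 * (0:ℝ) ^ 2) ^ (-(3:ℝ)/2)) = _
    rw [show P0 + k1 * (0:ℝ) ^ 2 = P0 by ring, show Q0 + k3 * (0:ℝ) ^ 2 = Q0 by ring,
      hC1def, hk1def, hk3def]
    ring
  have hkey := key_rpow_lt β P0 Q0 hβpos hP0pos hQP
  have hG0neg : G 0 < 0 := by
    rw [hG0]
    exact mul_neg_of_pos_of_neg (div_pos (by linarith) hσ2) (by linarith)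
  constructor
  · rw [hfun, hderiv1, h2nd.deriv]
    exact hG0neg
  · intro hmin
    have hpath : ContinuousAt (fun t : ℝ => a + t • astar) 0 :=
      (continuous_const.add (continuous_id.smul continuous_const)).continuousAt
    have hmin0 : IsLocalMin (fun t : ℝ => g (a + t • astar)) 0 :=
      IsLocalMin.comp_continuous (f := g) (g := fun t : ℝ => a + t • astar) (b := 0)
        (by simpa using hmin) hpath
    rw [hfun] at hmin0
    set δ0 : ℝ := (Q0 - β * P0) / (2 * k3) with hδ0def
    have hδ0pos : 0 < δ0 := by rw [hδ0def]; exact div_pos (by linarith) (by linarith)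
    set φ : ℝ → ℝ := fun s => C1 * (P0 + k1 * s) ^ (-(1:ℝ)/2) + K2
        - 2 * (C3 * (Q0 + k3 * s) ^ (-(1:ℝ)/2)) with hφdef
    have hφd : ∀ s : ℝ, 0 ≤ s → HasDerivAt φ
        (C1 * (k1 * (-(1:ℝ)/2) * (P0 + k1 * s) ^ (-(3:ℝ)/2))
          - 2 * (C3 * (k3 * (-(1:ℝ)/2) * (Q0 + k3 * s) ^ (-(3:ℝ)/2)))) s := by
      intro s hs
      have hp1 : 0 < P0 + k1 * s := by linarith [mul_nonneg hk1pos.le hs]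
      have hp3 : 0 < Q0 + k3 * s := by linarith [mul_nonneg hk3pos.le hs]
      have h1 := hasDerivAt_piece' P0 k1 (-(1:ℝ)/2) (-(3:ℝ)/2) s hp1 hq32
      have h3 := hasDerivAt_piece' Q0 k3 (-(1:ℝ)/2) (-(3:ℝ)/2) s hp3 hq32
      exact ((HasDerivAt.const_mul C1 h1).add_const K2).sub
        (HasDerivAt.const_mul 2 (HasDerivAt.const_mul C3 h3))
    have hval : ∀ s : ℝ, 0 ≤ s → s < δ0 → deriv φ s < 0 := by
      intro s hs hsδ
      rw [(hφd s hs).deriv]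
      have h2k3 : 0 < 2 * k3 := by linarith
      rw [hδ0def, lt_div_iff₀ h2k3] at hsδ
      have hβk1 : β * k1 = 2 * k3 := by rw [hk1def, hk3def]; ring
      have hXY : β * (P0 + k1 * s) < Q0 + k3 * s := by
        have hβk1s : β * k1 * s = 2 * k3 * s := by rw [hβk1]
        have hexp : β * (P0 + k1 * s) = β * P0 + β * k1 * s := by ring
        rw [hexp, hβk1s]
        linarith [mul_nonneg hk3pos.le hs]
      have hp1 : 0 < P0 + k1 * s := by linarith [mul_nonneg hk1pos.le hs]
      have hkey2 := key_rpow_lt β (P0 + k1 * s) (Q0 + k3 * s) hβpos hp1 hXY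
      have hfact : C1 * (k1 * (-(1:ℝ)/2) * (P0 + k1 * s) ^ (-(3:ℝ)/2))
          - 2 * (C3 * (k3 * (-(1:ℝ)/2) * (Q0 + k3 * s) ^ (-(3:ℝ)/2)))
          = (C3 / σ ^ 2) * (β * (Q0 + k3 * s) ^ (-(3:ℝ)/2)
              - β ^ (-(1:ℝ)/2) * (P0 + k1 * s) ^ (-(3:ℝ)/2)) := by
        rw [hC1def, hk1def, hk3def]
        ring
      rw [hfact]
      exact mul_neg_of_pos_of_neg (div_pos hC3pos hσ2) (by linarith)
    have hanti : StrictAntiOn φ (Set.Icc 0 δ0) := by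
      apply strictAntiOn_of_deriv_neg (convex_Icc 0 δ0)
      · intro s hs
        exact ((hφd s hs.1).differentiableAt).continuousAt.continuousWithinAt
      · intro s hs
        rw [interior_Icc] at hs
        exact hval s hs.1.le hs.2
    obtain ⟨η, hη, hball⟩ := Metric.eventually_nhds_iff.mp hmin0
    set t0 : ℝ := min η (Real.sqrt δ0) / 2 with ht0def
    have hmin_pos : 0 < min η (Real.sqrt δ0) := lt_min hη (Real.sqrt_pos.mpr hδ0pos)
    have ht0pos : 0 < t0 := by rw [ht0def]; linarith
    have hdist : dist t0 0 < η := by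
      rw [Real.dist_eq, sub_zero, abs_of_pos ht0pos, ht0def]
      have := min_le_left η (Real.sqrt δ0)
      linarith
    have hFle := hball hdist
    have ht0le : t0 ≤ Real.sqrt δ0 / 2 := by
      rw [ht0def]
      have := min_le_right η (Real.sqrt δ0)
      linarith
    have ht0sq : t0 ^ 2 ≤ δ0 := by
      have h1 : t0 ^ 2 ≤ (Real.sqrt δ0 / 2) ^ 2 := by
        apply pow_le_pow_left₀ ht0pos.le ht0le
      have h2 : (Real.sqrt δ0 / 2) ^ 2 = δ0 / 4 := by
        rw [div_pow, Real.sq_sqrt hδ0pos.le]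
        norm_num
      linarith
    have hlt : φ (t0 ^ 2) < φ 0 :=
      hanti (Set.left_mem_Icc.mpr hδ0pos.le) ⟨sq_nonneg _, ht0sq⟩ (by positivity)
    have hFle' : φ ((0:ℝ) ^ 2) ≤ φ (t0 ^ 2) := hFle
    have h00 : φ ((0:ℝ) ^ 2) = φ 0 := by norm_num
    rw [h00] at hFle'
    linarith
end

section
/- Let d ≥ 1, let C > 0, let μ* ∈ ℝ^d with μ* ≠ 0, and let B ∈ ℝ^{d×d} be symmetric positive definite. Define F : ℝ^d → ℝ by F(μ) := C·[ exp(-2 μᵀBμ) + 1 + exp(-2 μ*ᵀBμ*) + 1 − 2 exp(-(1/2)(μ−μ*)ᵀB(μ−μ*)) − 2 exp(-(1/2)(μ+μ*)ᵀB(μ+μ*)) ]. Then F(μ*) = F(−μ*) = 0 and F(μ) ≥ 0 for all μ ∈ ℝ^d; in particular μ* and −μ* are global minimizers of F. -/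
open Matrix

private lemma mmd_core (s t a b : ℝ) (ha : 0 ≤ a) (hb : 0 ≤ b)
    (hab : a + b = 2 * s + 2 * t) :
    0 ≤ Real.exp (-2 * s) + 1 + Real.exp (-2 * t) + 1
      - 2 * Real.exp (-(1 / 2) * a) - 2 * Real.exp (-(1 / 2) * b) := by
  have hA : Real.exp (-(1 / 2) * a) ≤ 1 := Real.exp_le_one_iff.mpr (by nlinarith)
  have hB : Real.exp (-(1 / 2) * b) ≤ 1 := Real.exp_le_one_iff.mpr (by nlinarith)
  have hAB : Real.exp (-(1 / 2) * a) * Real.exp (-(1 / 2) * b)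
      = Real.exp (-s) * Real.exp (-t) := by
    rw [← Real.exp_add, ← Real.exp_add]
    congr 1
    linarith
  have h1 : Real.exp (-2 * s) = Real.exp (-s) * Real.exp (-s) := by
    rw [← Real.exp_add]; ring_nf
  have h2 : Real.exp (-2 * t) = Real.exp (-t) * Real.exp (-t) := by
    rw [← Real.exp_add]; ring_nf
  nlinarith [sq_nonneg (Real.exp (-s) - Real.exp (-t)),
    mul_nonneg (sub_nonneg.mpr hA) (sub_nonneg.mpr hB),
    Real.exp_pos (-(1 / 2) * a), Real.exp_pos (-(1 / 2) * b)]

private lemma par_id {d : ℕ} (B : Matrix (Fin d) (Fin d) ℝ) (x y : Fin d → ℝ) :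
    (x - y) ⬝ᵥ (B *ᵥ (x - y)) + (x + y) ⬝ᵥ (B *ᵥ (x + y))
      = 2 * (x ⬝ᵥ (B *ᵥ x)) + 2 * (y ⬝ᵥ (B *ᵥ y)) := by
  simp only [Matrix.mulVec_sub, Matrix.mulVec_add, sub_dotProduct,
    add_dotProduct, dotProduct_sub, dotProduct_add]
  ring

private lemma double_id {d : ℕ} (B : Matrix (Fin d) (Fin d) ℝ) (x : Fin d → ℝ) :
    (x + x) ⬝ᵥ (B *ᵥ (x + x)) = 4 * (x ⬝ᵥ (B *ᵥ x)) := by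
  simp only [Matrix.mulVec_add, add_dotProduct, dotProduct_add]
  ring

private lemma neg_id {d : ℕ} (B : Matrix (Fin d) (Fin d) ℝ) (x : Fin d → ℝ) :
    (-x) ⬝ᵥ (B *ᵥ (-x)) = x ⬝ᵥ (B *ᵥ x) := by
  simp [Matrix.mulVec_neg]

theorem mmd_gmm_global_minima (d : ℕ) (hd : 1 ≤ d) (C : ℝ) (hC : 0 < C)
    (μstar : EuclideanSpace ℝ (Fin d)) (hμstar : μstar ≠ 0)
    (B : Matrix (Fin d) (Fin d) ℝ) (hB : B.IsSymm) (hB' : B.PosDef)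
    (F : EuclideanSpace ℝ (Fin d) → ℝ)
    (hF : F = fun μ : EuclideanSpace ℝ (Fin d) =>
      C * (Real.exp (-2 * (μ ⬝ᵥ (B *ᵥ μ))) + 1 + Real.exp (-2 * (μstar ⬝ᵥ (B *ᵥ μstar))) + 1
        - 2 * Real.exp (-(1 / 2) * ((μ - μstar) ⬝ᵥ (B *ᵥ (μ - μstar))))
        - 2 * Real.exp (-(1 / 2) * ((μ + μstar) ⬝ᵥ (B *ᵥ (μ + μstar)))))) :
    F μstar = 0 ∧ F (-μstar) = 0 ∧ ∀ μ : EuclideanSpace ℝ (Fin d), 0 ≤ F μ := by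
  subst hF
  have hpsd : ∀ x : Fin d → ℝ, 0 ≤ x ⬝ᵥ (B *ᵥ x) := by
    intro x
    have := hB'.posSemidef.re_dotProduct_nonneg x
    simpa using this
  refine ⟨?_, ?_, ?_⟩
  · show C * (Real.exp (-2 * (μstar ⬝ᵥ (B *ᵥ μstar))) + 1
      + Real.exp (-2 * (μstar ⬝ᵥ (B *ᵥ μstar))) + 1
      - 2 * Real.exp (-(1 / 2) * ((μstar - μstar) ⬝ᵥ (B *ᵥ (μstar - μstar))))
      - 2 * Real.exp (-(1 / 2) * ((μstar + μstar) ⬝ᵥ (B *ᵥ (μstar + μstar))))) = 0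
    have h0 : (μstar - μstar : EuclideanSpace ℝ (Fin d)) = 0 := sub_self _
    rw [h0]
    have h1 : ((0 : EuclideanSpace ℝ (Fin d)) : Fin d → ℝ) ⬝ᵥ (B *ᵥ ((μstar : Fin d → ℝ) - μstar)) = 0 := by
      simp
    have h2 : ((μstar + μstar : EuclideanSpace ℝ (Fin d)) : Fin d → ℝ) ⬝ᵥ
        (B *ᵥ ((μstar : Fin d → ℝ) + μstar)) = 4 * (μstar ⬝ᵥ (B *ᵥ μstar)) :=
      double_id B (μstar : Fin d → ℝ)
    rw [h1, h2]
    rw [show (-(1 / 2) : ℝ) * (4 * (μstar ⬝ᵥ (B *ᵥ μstar))) = -2 * (μstar ⬝ᵥ (B *ᵥ μstar)) by ring]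
    simp only [mul_zero, neg_zero, Real.exp_zero]
    ring
  · show C * (Real.exp (-2 * ((-μstar : EuclideanSpace ℝ (Fin d)) ⬝ᵥ (B *ᵥ (-μstar : Fin d → ℝ))))
      + 1 + Real.exp (-2 * (μstar ⬝ᵥ (B *ᵥ μstar))) + 1
      - 2 * Real.exp (-(1 / 2) * ((-μstar - μstar : EuclideanSpace ℝ (Fin d)) ⬝ᵥ (B *ᵥ (-μstar - μstar : Fin d → ℝ))))
      - 2 * Real.exp (-(1 / 2) * ((-μstar + μstar : EuclideanSpace ℝ (Fin d)) ⬝ᵥ (B *ᵥ (-μstar + μstar : Fin d → ℝ))))) = 0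
    have h0 : (-μstar + μstar : EuclideanSpace ℝ (Fin d)) = 0 := neg_add_cancel _
    have hm : (-μstar - μstar : EuclideanSpace ℝ (Fin d)) = -(μstar + μstar) := by abel
    rw [h0, hm]
    have h1 : ((0 : EuclideanSpace ℝ (Fin d)) : Fin d → ℝ) ⬝ᵥ (B *ᵥ (-(μstar : Fin d → ℝ) + μstar)) = 0 := by
      simp
    have h2 : ((-(μstar + μstar) : EuclideanSpace ℝ (Fin d)) : Fin d → ℝ) ⬝ᵥ
        (B *ᵥ (-(μstar : Fin d → ℝ) - μstar)) = 4 * (μstar ⬝ᵥ (B *ᵥ μstar)) := by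
      rw [show -(μstar : Fin d → ℝ) - μstar = -((μstar : Fin d → ℝ) + μstar) by abel]
      exact (neg_id B _).trans (double_id B _)
    have h3 : ((-μstar : EuclideanSpace ℝ (Fin d)) : Fin d → ℝ) ⬝ᵥ (B *ᵥ (-μstar : Fin d → ℝ))
        = μstar ⬝ᵥ (B *ᵥ μstar) := neg_id B (μstar : Fin d → ℝ)
    rw [h1, h2, h3]
    rw [show (-(1 / 2) : ℝ) * (4 * (μstar ⬝ᵥ (B *ᵥ μstar))) = -2 * (μstar ⬝ᵥ (B *ᵥ μstar)) by ring]
    simp only [mul_zero, neg_zero, Real.exp_zero]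
    ring
  · intro μ
    show 0 ≤ C * (Real.exp (-2 * (μ ⬝ᵥ (B *ᵥ μ))) + 1 + Real.exp (-2 * (μstar ⬝ᵥ (B *ᵥ μstar))) + 1
        - 2 * Real.exp (-(1 / 2) * ((μ - μstar) ⬝ᵥ (B *ᵥ (μ - μstar))))
        - 2 * Real.exp (-(1 / 2) * ((μ + μstar) ⬝ᵥ (B *ᵥ (μ + μstar)))))
    have key := mmd_core (μ ⬝ᵥ (B *ᵥ μ)) (μstar ⬝ᵥ (B *ᵥ μstar))
      ((μ - μstar) ⬝ᵥ (B *ᵥ (μ - μstar))) ((μ + μstar) ⬝ᵥ (B *ᵥ (μ + μstar)))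
      (hpsd _) (hpsd _) (par_id B (μ : Fin d → ℝ) (μstar : Fin d → ℝ))
    exact mul_nonneg hC.le key
end

section
/- Let α ∈ (0,1) and define g : ℝ → ℝ by g(t) := (t−1)·α^{(t−1)²} + (t+1)·α^{(t+1)²} − 2t·α^{4t²}, where α^x := exp(x·log α) for real x. Then g(t) < 0 for all t ∈ (−∞,−1) ∪ (0,1), g(t) > 0 for all t ∈ (−1,0) ∪ (1,∞), and g(−1) = g(0) = g(1) = 0. -/
lemma gmm_aux_identity (L t : ℝ) :
    (t-1)*Real.exp (L*(t-1)^2) + (t+1)*Real.exp (L*(t+1)^2) - 2*t*Real.exp (L*(4*t^2))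
    = Real.exp (L*(4*t^2)) *
        (Real.exp (L*(-3*t^2+2*t+1)) * ((t-1)*Real.exp (-(4*L*t)) + (t+1)) - 2*t) := by
  have e1 : Real.exp (L*(t-1)^2)
      = Real.exp (L*(4*t^2)) * (Real.exp (L*(-3*t^2+2*t+1)) * Real.exp (-(4*L*t))) := by
    rw [← Real.exp_add, ← Real.exp_add]; congr 1; ring
  have e2 : Real.exp (L*(t+1)^2)
      = Real.exp (L*(4*t^2)) * Real.exp (L*(-3*t^2+2*t+1)) := by
    rw [← Real.exp_add]; congr 1; ring
  rw [e1, e2]; ring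

lemma gmm_aux_pos (L t : ℝ) (hL : L < 0) (ht : 1 < t) :
    0 < (t-1)*Real.exp (L*(t-1)^2) + (t+1)*Real.exp (L*(t+1)^2) - 2*t*Real.exp (L*(4*t^2)) := by
  rw [gmm_aux_identity]
  apply mul_pos (Real.exp_pos _)
  have ht0 : 0 < t := lt_trans one_pos ht
  have hq : 1 < Real.exp (L*(-3*t^2+2*t+1)) := by
    rw [Real.one_lt_exp_iff]
    have hneg : -3*t^2+2*t+1 < 0 := by nlinarith
    exact mul_pos_of_neg_of_neg hL hneg
  have hE : 1 < Real.exp (-(4*L*t)) := by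
    rw [Real.one_lt_exp_iff]
    nlinarith [mul_pos (neg_pos.mpr hL) ht0]
  have hB : 2*t < (t-1)*Real.exp (-(4*L*t)) + (t+1) := by nlinarith
  nlinarith [Real.exp_pos (L*(-3*t^2+2*t+1))]

lemma gmm_aux_neg (L t : ℝ) (hL : L < 0) (ht0 : 0 < t) (ht1 : t < 1) :
    (t-1)*Real.exp (L*(t-1)^2) + (t+1)*Real.exp (L*(t+1)^2) - 2*t*Real.exp (L*(4*t^2)) < 0 := by
  rw [gmm_aux_identity]
  have h4 : 0 < Real.exp (L*(4*t^2)) := Real.exp_pos _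
  have hq1 : Real.exp (L*(-3*t^2+2*t+1)) < 1 := by
    rw [Real.exp_lt_one_iff]
    have hpos : 0 < -3*t^2+2*t+1 := by nlinarith
    exact mul_neg_of_neg_of_pos hL hpos
  have hq0 : 0 < Real.exp (L*(-3*t^2+2*t+1)) := Real.exp_pos _
  have hE : 1 < Real.exp (-(4*L*t)) := by
    rw [Real.one_lt_exp_iff]
    nlinarith [mul_pos (neg_pos.mpr hL) ht0]
  have hB : (t-1)*Real.exp (-(4*L*t)) + (t+1) < 2*t := by nlinarith
  have hmain : Real.exp (L*(-3*t^2+2*t+1)) * ((t-1)*Real.exp (-(4*L*t)) + (t+1)) < 2*t := by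
    rcases le_or_gt ((t-1)*Real.exp (-(4*L*t)) + (t+1)) 0 with hb | hb
    · calc Real.exp (L*(-3*t^2+2*t+1)) * ((t-1)*Real.exp (-(4*L*t)) + (t+1)) ≤ 0 :=
            mul_nonpos_of_nonneg_of_nonpos (le_of_lt hq0) hb
        _ < 2*t := by linarith
    · nlinarith
  nlinarith

theorem gmm_line_derivative_sign (α : ℝ) (hα0 : 0 < α) (hα1 : α < 1)
    (g : ℝ → ℝ)
    (hg : g = fun t : ℝ =>
      (t - 1) * α ^ ((t - 1) ^ 2) + (t + 1) * α ^ ((t + 1) ^ 2) - 2 * t * α ^ (4 * t ^ 2)) :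
    (∀ t : ℝ, t < -1 ∨ (0 < t ∧ t < 1) → g t < 0) ∧
    (∀ t : ℝ, (-1 < t ∧ t < 0) ∨ 1 < t → 0 < g t) ∧
    g (-1) = 0 ∧ g 0 = 0 ∧ g 1 = 0 := by
  have hL : Real.log α < 0 := Real.log_neg hα0 hα1
  set L := Real.log α with hLdef
  have hgexp : ∀ t : ℝ, g t = (t-1)*Real.exp (L*(t-1)^2) + (t+1)*Real.exp (L*(t+1)^2)
      - 2*t*Real.exp (L*(4*t^2)) := by
    intro t
    rw [hg]
    simp only [Real.rpow_def_of_pos hα0]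
    rw [← hLdef]
  have hodd : ∀ t : ℝ, g (-t) = - g t := by
    intro t
    rw [hgexp, hgexp]
    have e1 : (-t-1)^2 = (t+1)^2 := by ring
    have e2 : (-t+1)^2 = (t-1)^2 := by ring
    have e3 : (4*(-t)^2) = (4*t^2) := by ring
    rw [e1, e2, e3]
    ring
  have hpos : ∀ t : ℝ, 1 < t → 0 < g t := by
    intro t ht; rw [hgexp]; exact gmm_aux_pos L t hL ht
  have hneg : ∀ t : ℝ, 0 < t → t < 1 → g t < 0 := by
    intro t ht0 ht1; rw [hgexp]; exact gmm_aux_neg L t hL ht0 ht1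
  refine ⟨?_, ?_, ?_, ?_, ?_⟩
  · intro t h
    rcases h with h | ⟨h0, h1⟩
    · have : 0 < g (-t) := hpos (-t) (by linarith)
      rw [hodd] at this; linarith
    · exact hneg t h0 h1
  · intro t h
    rcases h with ⟨h0, h1⟩ | h
    · have : g (-t) < 0 := hneg (-t) (by linarith) (by linarith)
      rw [hodd] at this; linarith
    · exact hpos t h
  · have h1 : g 1 = 0 := by rw [hgexp]; ring
    have := hodd 1; rw [h1] at this; simpa using this
  · rw [hgexp]; norm_num
  · rw [hgexp]; ring
end
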